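/- arXiv:1301.6236 — 10 statements merged into one kernel-verified Lean document; each statement's English description precedes it below -/
import Mathlib

section
/- The F_q[X]-module M_{s,ℓ} of all bivariate polynomials Q(X,Y) of Y-degree at most ℓ passing through the n points (α_i, r_i') with multiplicity at least s is generated by the ℓ+1 polynomials P^(t)(X,Y) = G(X)^{s−t}(Y − R(X))^t for 0 ≤ t < s, and P^(t)(X,Y) = Y^{t−s}(Y − R(X))^s for s ≤ t ≤ ℓ. -/
open Polynomial

/-- The shifted polynomial Q(X+a, Y+b), where `Q : F[X][Y]` (outer variable `Y`,
inner variable `X`). -/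
noncomputable def shiftXY {F : Type*} [Field F] (Q : Polynomial (Polynomial F)) (a b : F) :
    Polynomial (Polynomial F) :=
  (Q.map ((aeval (X + C a : Polynomial F)).toRingHom : Polynomial F →+* Polynomial F)).comp
    (X + C (C b))

/-- `Q` vanishes with multiplicity at least `s` at the point `(a, b)`:
`Q(X+a, Y+b)` has no monomial `X^i Y^j` with `i + j < s`. -/
def HasMultAt {F : Type*} [Field F] (Q : Polynomial (Polynomial F)) (a b : F) (s : ℕ) : Prop :=
  ∀ i j : ℕ, i + j < s → ((shiftXY Q a b).coeff j).coeff i = 0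

/-- The set (an `F[X]`-module) of bivariate polynomials of `Y`-degree at most `ℓ`
vanishing with multiplicity at least `s` at each point `(α i, r' i)`. -/
def InterpSet {F : Type*} [Field F] {n : ℕ} (α r' : Fin n → F) (s ℓ : ℕ) :
    Set (Polynomial (Polynomial F)) :=
  {Q | Q.natDegree ≤ ℓ ∧ ∀ i, HasMultAt Q (α i) (r' i) s}

/-- The family `b` is a basis of the `F[X]`-module `M_{s,ℓ} = InterpSet α r' s ℓ`:
it is linearly independent over `F[X]` and its `F[X]`-span is exactly `M_{s,ℓ}`. -/
def IsBasisOfInterp {F : Type*} [Field F] {n : ℕ} (α r' : Fin n → F) (s ℓ : ℕ)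
    {ι : Type*} (b : ι → Polynomial (Polynomial F)) : Prop :=
  LinearIndependent (Polynomial F) b ∧
    (Submodule.span (Polynomial F) (Set.range b) : Set (Polynomial (Polynomial F))) =
      InterpSet α r' s ℓ

/-! ### Auxiliary machinery -/

/-- `shiftXY` as a ring homomorphism. -/
noncomputable def shiftRingHom {F : Type*} [Field F] (a b : F) :
    Polynomial (Polynomial F) →+* Polynomial (Polynomial F) :=
  (eval₂RingHom C (X + C (C b))).comp
    (mapRingHom ((aeval (X + C a : Polynomial F)).toRingHom : Polynomial F →+* Polynomial F))

theorem shiftXY_def {F : Type*} [Field F] (Q : Polynomial (Polynomial F)) (a b : F) :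
    shiftXY Q a b = shiftRingHom a b Q := rfl

theorem shiftXY_C {F : Type*} [Field F] (p : Polynomial F) (a b : F) :
    shiftXY (C p) a b = C (taylor a p) := by
  simp [shiftXY, taylor_apply, aeval_def, eval₂_eq_eval_map, Polynomial.comp]

theorem shiftXY_X {F : Type*} [Field F] (a b : F) :
    shiftXY (X : Polynomial (Polynomial F)) a b = X + C (C b) := by
  simp [shiftXY]

/-- Lower bound on the total degree of all monomials of a bivariate polynomial. -/
def LB {F : Type*} [Field F] (Q : Polynomial (Polynomial F)) (s : ℕ) : Prop :=
  ∀ i j : ℕ, i + j < s → (Q.coeff j).coeff i = 0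

theorem LB_mul {F : Type*} [Field F] {A B : Polynomial (Polynomial F)} {s t : ℕ}
    (hA : LB A s) (hB : LB B t) : LB (A * B) (s + t) := by
  intro i j hij
  rw [coeff_mul, finset_sum_coeff]
  refine Finset.sum_eq_zero fun x hx => ?_
  rw [Finset.HasAntidiagonal.mem_antidiagonal] at hx
  rw [coeff_mul]
  refine Finset.sum_eq_zero fun y hy => ?_
  rw [Finset.HasAntidiagonal.mem_antidiagonal] at hy
  rcases lt_or_ge (y.1 + x.1) s with h | h
  · rw [hA y.1 x.1 h, zero_mul]
  · rw [hB y.2 x.2 (by omega), mul_zero]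

theorem LB_pow {F : Type*} [Field F] {A : Polynomial (Polynomial F)} {s : ℕ}
    (hA : LB A s) (t : ℕ) : LB (A ^ t) (t * s) := by
  induction t with
  | zero => intro i j h; omega
  | succ t ih =>
      rw [pow_succ, Nat.succ_mul]
      exact LB_mul ih hA

theorem LB_C {F : Type*} [Field F] {q : Polynomial F} {m : ℕ} (h : X ^ m ∣ q) :
    LB (C q : Polynomial (Polynomial F)) m := by
  intro i j hij
  rw [coeff_C]
  split_ifs with hj
  · exact X_pow_dvd_iff.mp h i (by omega)
  · simp

theorem hasMultAt_iff_LB {F : Type*} [Field F] {Q : Polynomial (Polynomial F)} {a b : F} {s : ℕ} :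
    HasMultAt Q a b s ↔ LB (shiftXY Q a b) s := Iff.rfl

theorem hasMultAt_zeroOrder {F : Type*} [Field F] (Q : Polynomial (Polynomial F)) (a b : F) :
    HasMultAt Q a b 0 := fun i j h => by omega

theorem hasMultAt_zero_poly {F : Type*} [Field F] (a b : F) (s : ℕ) :
    HasMultAt (0 : Polynomial (Polynomial F)) a b s := by
  intro i j h
  rw [shiftXY_def, map_zero]
  simp

theorem hasMultAt_add {F : Type*} [Field F] {A B : Polynomial (Polynomial F)} {a b : F}
    {s : ℕ} (hA : HasMultAt A a b s) (hB : HasMultAt B a b s) :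
    HasMultAt (A + B) a b s := by
  intro i j h
  have h1 := hA i j h
  have h2 := hB i j h
  rw [shiftXY_def] at h1 h2 ⊢
  rw [map_add, coeff_add, coeff_add, h1, h2, add_zero]

theorem hasMultAt_mul {F : Type*} [Field F] {A B : Polynomial (Polynomial F)} {a b : F}
    {s t : ℕ} (hA : HasMultAt A a b s) (hB : HasMultAt B a b t) :
    HasMultAt (A * B) a b (s + t) := by
  rw [hasMultAt_iff_LB, shiftXY_def, map_mul]
  exact LB_mul (hasMultAt_iff_LB.mp hA) (hasMultAt_iff_LB.mp hB)

theorem hasMultAt_pow {F : Type*} [Field F] {A : Polynomial (Polynomial F)} {a b : F}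
    {s : ℕ} (hA : HasMultAt A a b s) (t : ℕ) : HasMultAt (A ^ t) a b (t * s) := by
  rw [hasMultAt_iff_LB, shiftXY_def, map_pow]
  exact LB_pow (hasMultAt_iff_LB.mp hA) t

theorem hasMultAt_C_mul {F : Type*} [Field F] {Q : Polynomial (Polynomial F)} {a b : F}
    {s : ℕ} (p : Polynomial F) (h : HasMultAt Q a b s) : HasMultAt (C p * Q) a b s := by
  have := hasMultAt_mul (hasMultAt_zeroOrder (C p : Polynomial (Polynomial F)) a b) h
  rwa [zero_add] at this

theorem taylor_algHom_eq {R : Type*} [CommSemiring R] (r : R) (p : R[X]) :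
    taylor r p = taylorAlgHom r p := rfl

theorem X_pow_dvd_taylor {F : Type*} [CommRing F] {p : Polynomial F} {a : F} {m : ℕ}
    (h : (X - C a) ^ m ∣ p) : X ^ m ∣ taylor a p := by
  obtain ⟨c, rfl⟩ := h
  refine ⟨taylor a c, ?_⟩
  rw [taylor_algHom_eq, map_mul, map_pow, map_sub, ← taylor_algHom_eq, ← taylor_algHom_eq]
  rw [taylor_X, taylor_C, taylor_algHom_eq]
  ring

theorem dvd_of_X_pow_dvd_taylor {F : Type*} [CommRing F] {p : Polynomial F} {a : F} {m : ℕ}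
    (h : X ^ m ∣ taylor a p) : (X - C a) ^ m ∣ p := by
  obtain ⟨c, hc⟩ := h
  refine ⟨taylor (-a) c, ?_⟩
  have := congrArg (taylor (-a)) hc
  rw [taylor_taylor, neg_add_cancel, taylor_zero, taylor_algHom_eq, map_mul, map_pow,
    ← taylor_algHom_eq, ← taylor_algHom_eq, taylor_X] at this
  rw [this, map_neg, ← sub_eq_add_neg]

theorem hasMultAt_C' {F : Type*} [Field F] {p : Polynomial F} {a : F} (b : F) {m : ℕ}
    (h : (X - C a) ^ m ∣ p) : HasMultAt (C p) a b m := by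
  rw [hasMultAt_iff_LB, shiftXY_C]
  exact LB_C (X_pow_dvd_taylor h)

theorem hasMultAt_X_sub_C {F : Type*} [Field F] {R : Polynomial F} {a b : F}
    (h : R.eval a = b) : HasMultAt (X - C R) a b 1 := by
  intro i j hij
  obtain ⟨rfl, rfl⟩ : i = 0 ∧ j = 0 := by omega
  rw [shiftXY_def, map_sub, ← shiftXY_def, ← shiftXY_def, shiftXY_X, shiftXY_C]
  simp [coeff_C, taylor_coeff_zero, h]

theorem taylor_coeff_of_natDegree_le {R : Type*} [CommRing R] (u : R) (P : R[X]) {d : ℕ}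
    (h : P.natDegree ≤ d) : (taylor u P).coeff d = P.coeff d := by
  nontriviality R
  have key : ∀ i ∈ P.support, ((taylor u) (monomial i (P.coeff i))).coeff d
      = (monomial i (P.coeff i)).coeff d := by
    intro i hi
    have hid : i ≤ d := le_trans (le_natDegree_of_mem_supp i hi) h
    rw [taylor_monomial, coeff_C_mul, coeff_monomial]
    rcases eq_or_lt_of_le hid with rfl | hlt
    · have : ((X + C u) ^ i).coeff i = 1 := by
        have := ((monic_X_add_C u).pow i).coeff_natDegree
        rwa [(monic_X_add_C u).natDegree_pow, natDegree_X_add_C, mul_one] at this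
      rw [this, if_pos rfl, mul_one]
    · have h0 : ((X + C u) ^ i).coeff d = 0 := coeff_eq_zero_of_natDegree_lt (by
        rw [(monic_X_add_C u).natDegree_pow, natDegree_X_add_C, mul_one]; exact hlt)
      rw [if_neg (by omega), h0, mul_zero]
  conv_lhs => rw [P.as_sum_support, map_sum, finset_sum_coeff,
    Finset.sum_congr rfl key, ← finset_sum_coeff, ← P.as_sum_support]

theorem shiftXY_coeff_top {F : Type*} [Field F] (Q : Polynomial (Polynomial F)) (a b : F)
    {d : ℕ} (h : Q.natDegree ≤ d) :
    (shiftXY Q a b).coeff d = taylor a (Q.coeff d) := by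
  have h1 : (Q.map ((aeval (X + C a : Polynomial F)).toRingHom :
      Polynomial F →+* Polynomial F)).natDegree ≤ d := natDegree_map_le.trans h
  have key := taylor_coeff_of_natDegree_le (C b : Polynomial F)
    (Q.map ((aeval (X + C a : Polynomial F)).toRingHom : Polynomial F →+* Polynomial F)) h1
  rw [taylor_apply] at key
  show ((Q.map _).comp (X + C (C b))).coeff d = _
  rw [key, coeff_map]
  simp [taylor_apply, aeval_def, Polynomial.comp, eval₂_eq_eval_map]

/-- Key divisibility: the `d`-th `Y`-coefficient of a polynomial of `Y`-degree at most `d`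
vanishing to order `s` at `(a,b)` is divisible by `(X-a)^(s-d)`. -/
theorem key_dvd {F : Type*} [Field F] {Q : Polynomial (Polynomial F)} {a b : F} {s d : ℕ}
    (h : HasMultAt Q a b s) (hd : Q.natDegree ≤ d) :
    (X - C a) ^ (s - d) ∣ Q.coeff d := by
  apply dvd_of_X_pow_dvd_taylor
  rw [X_pow_dvd_iff]
  intro k hk
  have hk' := h k d (by omega)
  rwa [shiftXY_coeff_top Q a b hd] at hk'

/-- `InterpSet` as a submodule over `F[X]`. -/
noncomputable def interpSubmodule {F : Type*} [Field F] {n : ℕ} (α r' : Fin n → F) (s ℓ : ℕ) :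
    Submodule (Polynomial F) (Polynomial (Polynomial F)) where
  carrier := InterpSet α r' s ℓ
  add_mem' := fun {A B} hA hB =>
    ⟨(natDegree_add_le _ _).trans (max_le hA.1 hB.1), fun i => hasMultAt_add (hA.2 i) (hB.2 i)⟩
  zero_mem' := ⟨by simp, fun i => hasMultAt_zero_poly _ _ _⟩
  smul_mem' := fun c x hx => by
    rw [smul_eq_C_mul]
    exact ⟨natDegree_mul_le.trans (by simpa [natDegree_C] using hx.1),
      fun i => hasMultAt_C_mul c (hx.2 i)⟩

theorem mem_interpSubmodule_iff {F : Type*} [Field F] {n : ℕ} {α r' : Fin n → F} {s ℓ : ℕ}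
    {Q : Polynomial (Polynomial F)} :
    Q ∈ interpSubmodule α r' s ℓ ↔ Q ∈ InterpSet α r' s ℓ := Iff.rfl

/-- The module M_{s,ℓ} is generated over F[X] by the ℓ+1 polynomials
P^(t) = G^{s−t}(Y − R)^t for 0 ≤ t < s and P^(t) = Y^{t−s}(Y − R)^s for s ≤ t ≤ ℓ. -/
theorem statement2 {F : Type*} [Field F] [Fintype F] {n : ℕ}
    (α : Fin n → F) (hα : Function.Injective α) (r' : Fin n → F)
    (s ℓ : ℕ) (hs : 1 ≤ s) (hsℓ : s ≤ ℓ)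
    (R : Polynomial F) (hRdeg : R.natDegree < n) (hR : ∀ i, R.eval (α i) = r' i) :
    InterpSet α r' s ℓ =
      (Submodule.span (Polynomial F)
        (Set.range (fun t : Fin (ℓ + 1) =>
          if (t : ℕ) < s then
            C ((∏ i, (X - C (α i))) ^ (s - (t : ℕ))) * (X - C R) ^ (t : ℕ)
          else
            X ^ ((t : ℕ) - s) * (X - C R) ^ s)) :
        Set (Polynomial (Polynomial F))) := by
  classical
  set G : Polynomial F := ∏ i, (X - C (α i)) with hGdef
  set genN : ℕ → Polynomial (Polynomial F) := fun t =>
    if t < s then C (G ^ (s - t)) * (X - C R) ^ t else X ^ (t - s) * (X - C R) ^ s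
    with hgenN
  set fam : Fin (ℓ + 1) → Polynomial (Polynomial F) := fun t =>
    if (t : ℕ) < s then C (G ^ (s - (t : ℕ))) * (X - C R) ^ (t : ℕ)
    else X ^ ((t : ℕ) - s) * (X - C R) ^ s with hfam
  have hfam_eq : ∀ t : Fin (ℓ + 1), fam t = genN (t : ℕ) := fun t => rfl
  have hGmonic : G.Monic := monic_prod_of_monic _ _ fun i _ => monic_X_sub_C _
  have hXR : ((X : Polynomial (Polynomial F)) - C R).Monic := monic_X_sub_C R
  -- degrees and top coefficients of generators
  have hgen_deg : ∀ t : ℕ, (genN t).natDegree = t := by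
    intro t
    by_cases hts : t < s
    · rw [hgenN]
      simp only [if_pos hts]
      rw [natDegree_C_mul (pow_ne_zero _ hGmonic.ne_zero),
        hXR.natDegree_pow, natDegree_X_sub_C, mul_one]
    · rw [hgenN]
      simp only [if_neg hts]
      rw [(monic_X_pow _).natDegree_mul (hXR.pow s), natDegree_X_pow,
        hXR.natDegree_pow, natDegree_X_sub_C, mul_one]
      omega
  have hgen_coeff : ∀ t : ℕ, (genN t).coeff t = if t < s then G ^ (s - t) else 1 := by
    intro t
    by_cases hts : t < s
    · rw [hgenN]
      simp only [if_pos hts]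
      have h1 : ((X - C R : Polynomial (Polynomial F)) ^ t).coeff t = 1 := by
        have := (hXR.pow t).coeff_natDegree
        rwa [hXR.natDegree_pow, natDegree_X_sub_C, mul_one] at this
      rw [coeff_C_mul, h1, mul_one]
    · rw [hgenN]
      simp only [if_neg hts]
      have hm : ((X : Polynomial (Polynomial F)) ^ (t - s) * (X - C R) ^ s).Monic :=
        (monic_X_pow _).mul (hXR.pow s)
      have hd : ((X : Polynomial (Polynomial F)) ^ (t - s) * (X - C R) ^ s).natDegree = t := by
        rw [(monic_X_pow _).natDegree_mul (hXR.pow s), natDegree_X_pow,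
          hXR.natDegree_pow, natDegree_X_sub_C, mul_one]
        omega
      have := hm.coeff_natDegree
      rwa [hd] at this
  -- generators belong to the interpolation set
  have hgen_mem : ∀ t : ℕ, t ≤ ℓ → genN t ∈ InterpSet α r' s ℓ := by
    intro t ht
    refine ⟨by rw [hgen_deg]; exact ht, fun i => ?_⟩
    by_cases hts : t < s
    · rw [hgenN]
      simp only [if_pos hts]
      have hdvd : (X - C (α i)) ^ (s - t) ∣ G ^ (s - t) :=
        pow_dvd_pow_of_dvd (Finset.dvd_prod_of_mem _ (Finset.mem_univ i)) _
      have h1 : HasMultAt (C (G ^ (s - t)) : Polynomial (Polynomial F)) (α i) (r' i) (s - t) :=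
        hasMultAt_C' (r' i) hdvd
      have h2 : HasMultAt ((X - C R : Polynomial (Polynomial F)) ^ t) (α i) (r' i) (t * 1) :=
        hasMultAt_pow (hasMultAt_X_sub_C (hR i)) t
      have := hasMultAt_mul h1 h2
      have he : s - t + t * 1 = s := by omega
      rwa [he] at this
    · rw [hgenN]
      simp only [if_neg hts]
      have h1 : HasMultAt ((X : Polynomial (Polynomial F)) ^ (t - s)) (α i) (r' i) 0 :=
        hasMultAt_zeroOrder _ _ _
      have h2 : HasMultAt ((X - C R : Polynomial (Polynomial F)) ^ s) (α i) (r' i) (s * 1) :=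
        hasMultAt_pow (hasMultAt_X_sub_C (hR i)) s
      have := hasMultAt_mul h1 h2
      have he : 0 + s * 1 = s := by omega
      rwa [he] at this
  have hrange : ∀ t : ℕ, t ≤ ℓ → genN t ∈ Set.range fam := by
    intro t ht
    exact ⟨⟨t, by omega⟩, rfl⟩
  apply Set.Subset.antisymm
  · -- InterpSet ⊆ span
    have main : ∀ d : ℕ, ∀ Q : Polynomial (Polynomial F), Q ∈ InterpSet α r' s ℓ →
        Q.natDegree ≤ d → Q ∈ Submodule.span (Polynomial F) (Set.range fam) := by
      intro d
      induction d using Nat.strong_induction_on with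
      | _ d IH =>
        intro Q hQ hdeg
        by_cases hQ0 : Q = 0
        · rw [hQ0]; exact Submodule.zero_mem _
        set d0 := Q.natDegree with hd0
        have hd0ℓ : d0 ≤ ℓ := hQ.1
        obtain ⟨c, hc⟩ : ∃ c : Polynomial F, (C c * genN d0).coeff d0 = Q.coeff d0 := by
          by_cases hds : d0 < s
          · obtain ⟨c, hcc⟩ : G ^ (s - d0) ∣ Q.coeff d0 := by
              rw [hGdef, ← Finset.prod_pow]
              refine Fintype.prod_dvd_of_coprime
                (fun i j hij => ((pairwise_coprime_X_sub_C hα) hij).pow) fun i => ?_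
              exact key_dvd (hQ.2 i) le_rfl
            exact ⟨c, by rw [coeff_C_mul, hgen_coeff, if_pos hds, hcc]; ring⟩
          · exact ⟨Q.coeff d0, by rw [coeff_C_mul, hgen_coeff, if_neg hds, mul_one]⟩
        have hsm_span : C c * genN d0 ∈ Submodule.span (Polynomial F) (Set.range fam) := by
          rw [← smul_eq_C_mul]
          exact Submodule.smul_mem _ _ (Submodule.subset_span (hrange d0 hd0ℓ))
        set Q' := Q - C c * genN d0 with hQ'
        have hQ'mem : Q' ∈ InterpSet α r' s ℓ := by
          rw [← mem_interpSubmodule_iff]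
          refine Submodule.sub_mem _ (mem_interpSubmodule_iff.mpr hQ) ?_
          rw [← smul_eq_C_mul]
          exact Submodule.smul_mem _ _ (mem_interpSubmodule_iff.mpr (hgen_mem d0 hd0ℓ))
        have hCcd : (C c * genN d0).natDegree ≤ d0 :=
          natDegree_mul_le.trans (by simp [natDegree_C, hgen_deg])
        have hQ'deg : Q'.natDegree ≤ d0 :=
          (natDegree_sub_le _ _).trans (max_le le_rfl hCcd)
        have hQ'c : Q'.coeff d0 = 0 := by
          rw [hQ', coeff_sub, hc, sub_self]
        have hsum : Q = Q' + C c * genN d0 := by rw [hQ']; ring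
        rcases eq_or_ne Q' 0 with h0 | h0
        · rw [hsum, h0, zero_add]
          exact hsm_span
        · have hlt : Q'.natDegree < d0 := by
            rcases lt_or_eq_of_le hQ'deg with h | h
            · exact h
            · exfalso
              apply h0
              apply leadingCoeff_eq_zero.mp
              rw [leadingCoeff, h]
              exact hQ'c
          have hspan' := IH Q'.natDegree (by omega) Q' hQ'mem le_rfl
          rw [hsum]
          exact Submodule.add_mem _ hspan' hsm_span
    intro Q hQ
    exact main ℓ Q hQ hQ.1
  · -- span ⊆ InterpSet
    have : Submodule.span (Polynomial F) (Set.range fam) ≤ interpSubmodule α r' s ℓ := by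
      rw [Submodule.span_le]
      rintro x ⟨t, rfl⟩
      rw [hfam_eq]
      exact mem_interpSubmodule_iff.mpr (hgen_mem (t : ℕ) (by omega))
    exact this
end

section
/- If a nonsingular square matrix V over F_q[X] is in weak Popov form, then its orthogonality defect is zero, i.e., the sum of the degrees of its rows equals the degree of its determinant. -/
open Polynomial
open scoped Classical

lemma coeff_prod_sum' {R : Type*} [CommSemiring R] {ι : Type*} (s : Finset ι)
    (f : ι → Polynomial R) (d : ι → ℕ) (h : ∀ i ∈ s, (f i).natDegree ≤ d i) :
    (∏ i ∈ s, f i).coeff (∑ i ∈ s, d i) = ∏ i ∈ s, (f i).coeff (d i) := by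
  induction s using Finset.cons_induction with
  | empty => simp
  | cons a s ha ih =>
    rw [Finset.prod_cons, Finset.sum_cons, Finset.prod_cons,
      ← ih (fun i hi => h i (Finset.mem_cons_of_mem hi))]
    exact Polynomial.coeff_mul_add_eq_of_natDegree_le (h a (Finset.mem_cons_self a s))
      (le_trans (Polynomial.natDegree_prod_le s f)
        (Finset.sum_le_sum fun i hi => h i (Finset.mem_cons_of_mem hi)))
/-- The degree of a vector over `F[X]`: the maximum of the degrees of its entries
(`⊥` for the zero vector). -/
noncomputable def vecDeg {F : Type*} [Field F] {m : ℕ} (v : Fin m → Polynomial F) : WithBot ℕ :=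
  Finset.univ.sup fun j => (v j).degree

/-- The leading position of a vector over `F[X]`: the largest index attaining the
vector's degree. -/
noncomputable def leadPos {F : Type*} [Field F] {m : ℕ} (v : Fin m → Polynomial F) : ℕ :=
  (Finset.univ.filter fun j : Fin m => (v j).degree = vecDeg v).sup fun j => (j : ℕ)

/-- A square matrix over `F[X]` is in weak Popov form if the leading positions of
its rows are pairwise distinct. -/
noncomputable def WeakPopov {F : Type*} [Field F] {m : ℕ}
    (V : Matrix (Fin m) (Fin m) (Polynomial F)) : Prop :=
  Function.Injective fun i => leadPos (V i)

/-- The degree of a matrix over `F[X]`: the sum of its row degrees (in `WithBot ℕ`). -/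
noncomputable def matDeg {F : Type*} [Field F] {m : ℕ}
    (V : Matrix (Fin m) (Fin m) (Polynomial F)) : WithBot ℕ :=
  ∑ i, vecDeg (V i)

/-- The degree of a vector over `F[X]`, as a natural number (via `natDegree`). -/
def vecDegNat {F : Type*} [Field F] {m : ℕ} (v : Fin m → Polynomial F) : ℕ :=
  Finset.univ.sup fun j => (v j).natDegree

/-- The degree of a matrix over `F[X]` as a natural number: the sum of its row degrees. -/
def matDegNat {F : Type*} [Field F] {m : ℕ}
    (V : Matrix (Fin m) (Fin m) (Polynomial F)) : ℕ :=
  ∑ i, vecDegNat (V i)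

/-- The diagonal weight matrix W_ℓ = diag(1, X^{k−1}, …, X^{ℓ(k−1)}). -/
noncomputable def Wmat (F : Type*) [Field F] (k ℓ : ℕ) :
    Matrix (Fin (ℓ + 1)) (Fin (ℓ + 1)) (Polynomial F) :=
  Matrix.diagonal fun i => X ^ ((i : ℕ) * (k - 1))
/-- If a nonsingular square matrix V over F[X] is in weak Popov form, then
its orthogonality defect is zero: the sum of the degrees of its rows equals the degree
of its determinant. -/
theorem statement4 {F : Type*} [Field F] [Fintype F] {m : ℕ}
    (V : Matrix (Fin m) (Fin m) (Polynomial F))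
    (hdet : V.det ≠ 0) (hV : WeakPopov V) :
    matDeg V = V.det.degree := by
  cases m with
  | zero =>
    simp [matDeg, Matrix.det_fin_zero]
  | succ m' =>
    have hrow : ∀ i, ∃ j, V i j ≠ 0 := by
      intro i
      by_contra h
      push_neg at h
      exact hdet (Matrix.det_eq_zero_of_row_eq_zero i h)
    set n : Fin (m' + 1) → ℕ := fun i => vecDegNat (V i) with hn
    have hent : ∀ i j, (V i j).natDegree ≤ n i := fun i j =>
      Finset.le_sup (f := fun j => (V i j).natDegree) (Finset.mem_univ j)
    have hdegle : ∀ i j, (V i j).degree ≤ (n i : WithBot ℕ) := fun i j =>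
      Polynomial.degree_le_natDegree.trans (Nat.cast_le.mpr (hent i j))
    have hvd : ∀ i, vecDeg (V i) = (n i : WithBot ℕ) := by
      intro i
      apply le_antisymm
      · exact Finset.sup_le fun j _ => hdegle i j
      · have hle : ∀ j, (V i j).degree ≤ vecDeg (V i) := fun j =>
          Finset.le_sup (f := fun j => (V i j).degree) (Finset.mem_univ j)
        obtain ⟨j0, -, hj0⟩ := Finset.exists_mem_eq_sup Finset.univ Finset.univ_nonempty
          (fun j => (V i j).natDegree)
        by_cases hz : V i j0 = 0
        · obtain ⟨j1, hj1⟩ := hrow i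
          have hn0 : n i = 0 := by
            show (Finset.univ.sup fun j => (V i j).natDegree) = 0
            rw [hj0, hz]; simp
          have hnd1 : (V i j1).natDegree = 0 := Nat.le_zero.mp (hn0 ▸ hent i j1)
          have hd1 : (V i j1).degree = ((n i : ℕ) : WithBot ℕ) := by
            rw [Polynomial.degree_eq_natDegree hj1, hnd1, hn0]
          exact hd1 ▸ hle j1
        · have hd0 : (V i j0).degree = ((n i : ℕ) : WithBot ℕ) := by
            rw [Polynomial.degree_eq_natDegree hz]
            norm_cast
            exact hj0.symm
          exact hd0 ▸ hle j0
    have hS : ∀ i, ∃ j : Fin (m' + 1),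
        (V i j).degree = vecDeg (V i) ∧ (j : ℕ) = leadPos (V i) := by
      intro i
      have hne : (Finset.univ.filter fun j => (V i j).degree = vecDeg (V i)).Nonempty := by
        obtain ⟨j0, -, hj0⟩ := Finset.exists_mem_eq_sup Finset.univ Finset.univ_nonempty
          (fun j => (V i j).degree)
        exact ⟨j0, Finset.mem_filter.mpr ⟨Finset.mem_univ _, hj0.symm⟩⟩
      obtain ⟨j, hjmem, hj⟩ := Finset.exists_mem_eq_sup _ hne (fun j : Fin (m' + 1) => (j : ℕ))
      exact ⟨j, (Finset.mem_filter.mp hjmem).2, hj.symm⟩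
    choose P hP1 hP2 using hS
    have hPinj : Function.Injective P := by
      intro a b hab
      exact hV (by simpa only [← hP2 a, ← hP2 b] using congrArg (fun j : Fin (m' + 1) => (j : ℕ)) hab)
    have hPbij := Finite.injective_iff_bijective.mp hPinj
    set σ : Equiv.Perm (Fin (m' + 1)) := Equiv.ofBijective P hPbij with hσ
    have hσP : ∀ x, σ x = P x := fun x => rfl
    set L : Matrix (Fin (m' + 1)) (Fin (m' + 1)) F := Matrix.of fun i j => (V i j).coeff (n i) with hL
    have hLd : ∀ i, L i (P i) ≠ 0 := by
      intro i
      have hdeg : (V i (P i)).degree = (n i : WithBot ℕ) := (hP1 i).trans (hvd i)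
      have hne0 : V i (P i) ≠ 0 := fun h => by simp [h] at hdeg
      have hnd : (V i (P i)).natDegree = n i := Polynomial.natDegree_eq_of_degree_eq_some hdeg
      show (V i (P i)).coeff (n i) ≠ 0
      rw [← hnd]
      exact Polynomial.leadingCoeff_ne_zero.mpr hne0
    have hLz : ∀ (i : Fin (m' + 1)) (j : Fin (m' + 1)), (P i : ℕ) < (j : ℕ) → L i j = 0 := by
      intro i j hij
      by_contra hc
      have h1 : n i ≤ (V i j).natDegree := Polynomial.le_natDegree_of_ne_zero hc
      have hne0 : V i j ≠ 0 := fun h => hc (by simp [hL, h])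
      have h2 : (V i j).degree = vecDeg (V i) := by
        rw [hvd i, Polynomial.degree_eq_natDegree hne0,
          le_antisymm (hent i j) h1]
      have h3 : (j : ℕ) ≤ leadPos (V i) :=
        Finset.le_sup (f := fun j : Fin (m' + 1) => (j : ℕ))
          (Finset.mem_filter.mpr ⟨Finset.mem_univ j, h2⟩)
      exact absurd (hP2 i ▸ h3) (not_le.mpr hij)
    have hLdet : L.det ≠ 0 := by
      have hperm := Matrix.det_permute σ.symm L
      have htri : (L.submatrix σ.symm id).BlockTriangular OrderDual.toDual := by
        intro i j hij
        refine hLz (σ.symm i) j ?_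
        have hPi : P (σ.symm i) = i := by rw [← hσP]; exact σ.apply_symm_apply i
        rw [hPi]
        exact Fin.lt_iff_val_lt_val.mp hij
      have hdiag : ∀ i, (L.submatrix σ.symm id) i i ≠ 0 := by
        intro i
        have hPi : P (σ.symm i) = i := by rw [← hσP]; exact σ.apply_symm_apply i
        simpa [Matrix.submatrix_apply, hPi] using hLd (σ.symm i)
      have hdetsub := Matrix.det_of_lowerTriangular _ htri
      intro h0
      rw [h0, mul_zero] at hperm
      rw [hperm] at hdetsub
      exact Finset.prod_ne_zero_iff.mpr (fun i _ => hdiag i) hdetsub.symm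
    set N := ∑ i, n i with hN
    have hcoeff : (V.det).coeff N = L.det := by
      rw [Matrix.det_apply', Matrix.det_apply', Polynomial.finset_sum_coeff]
      refine Finset.sum_congr rfl fun τ _ => ?_
      rw [← Polynomial.C_eq_intCast, Polynomial.coeff_C_mul]
      congr 1
      rw [show N = ∑ i, n (τ i) from (Equiv.sum_comp τ n).symm,
        coeff_prod_sum' _ _ _ (fun i _ => hent (τ i) i)]
      rfl
    have hdegN : (V.det).degree ≤ (N : WithBot ℕ) := by
      rw [Matrix.det_apply']
      refine (Polynomial.degree_sum_le _ _).trans (Finset.sup_le fun τ _ => ?_)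
      refine (Polynomial.degree_mul_le _ _).trans ?_
      have h2 : (∏ i, V (τ i) i).degree ≤ (N : WithBot ℕ) := by
        refine (Polynomial.degree_prod_le _ _).trans ?_
        calc ∑ i, (V (τ i) i).degree ≤ ∑ i, ((n (τ i) : WithBot ℕ)) :=
              Finset.sum_le_sum fun i _ => hdegle (τ i) i
          _ = (N : WithBot ℕ) := by
              rw [Equiv.sum_comp τ (fun i => (n i : WithBot ℕ)), hN, Nat.cast_sum]
      calc Polynomial.degree (((Equiv.Perm.sign τ : ℤ) : Polynomial F)) + (∏ i, V (τ i) i).degree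
            ≤ 0 + (N : WithBot ℕ) := add_le_add (Polynomial.degree_intCast_le _) h2
        _ = (N : WithBot ℕ) := zero_add _
    have hdeg : (V.det).degree = (N : WithBot ℕ) :=
      Polynomial.degree_eq_of_le_of_coeff_ne_zero hdegN (hcoeff ▸ hLdet)
    rw [hdeg, matDeg, Finset.sum_congr rfl fun i _ => hvd i, hN, Nat.cast_sum]
end

section
/- Let V be a nonsingular m×m matrix over F_q[X] in weak Popov form. Then V has minimal row-degree sum among all matrices unimodular-equivalent to V, i.e., for any invertible matrix U over F_q[X], deg(UV) ≥ deg V. -/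
open Polynomial

open scoped Classical

-- p achieving the leading position
lemma exists_leadPos {F : Type*} [Field F] {m : ℕ} (v : Fin m → Polynomial F)
    (h : vecDeg v ≠ ⊥) :
    ∃ p : Fin m, (p : ℕ) = leadPos v ∧ (v p).degree = vecDeg v := by
  have hne : (Finset.univ.filter fun j : Fin m => (v j).degree = vecDeg v).Nonempty := by
    have : ∃ j : Fin m, (v j).degree = vecDeg v := by
      by_cases hm : (Finset.univ : Finset (Fin m)).Nonempty
      · obtain ⟨j, _, hj⟩ := Finset.exists_mem_eq_sup Finset.univ hm fun j => (v j).degree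
        exact ⟨j, hj.symm⟩
      · exact absurd (by simp [vecDeg, Finset.not_nonempty_iff_eq_empty.mp hm]) h
    obtain ⟨j, hj⟩ := this
    exact ⟨j, by simp [hj]⟩
  obtain ⟨p, hp, hp2⟩ := Finset.exists_mem_eq_sup _ hne fun j : Fin m => (j : ℕ)
  exact ⟨p, hp2.symm, (Finset.mem_filter.mp hp).2⟩

lemma degree_le_vecDeg {F : Type*} [Field F] {m : ℕ} (v : Fin m → Polynomial F) (p : Fin m) :
    (v p).degree ≤ vecDeg v :=
  Finset.le_sup (f := fun j => (v j).degree) (Finset.mem_univ p)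

lemma le_leadPos {F : Type*} [Field F] {m : ℕ} {v : Fin m → Polynomial F} {p : Fin m}
    (h : (v p).degree = vecDeg v) : (p : ℕ) ≤ leadPos v :=
  Finset.le_sup (f := fun j : Fin m => (j : ℕ)) (by simp [h])

set_option maxHeartbeats 1000000 in
lemma key {F : Type*} [Field F] {m : ℕ} (V : Matrix (Fin m) (Fin m) (Polynomial F))
    (hV : WeakPopov V) (u : Fin m → Polynomial F) (j : Fin m) :
    (u j).degree + vecDeg (V j) ≤ vecDeg (fun p => ∑ i, u i * V i p) := by
  set D : Fin m → WithBot ℕ := fun i => (u i).degree + vecDeg (V i) with hD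
  set d : WithBot ℕ := Finset.univ.sup D with hd
  have hjd : D j ≤ d := Finset.le_sup (Finset.mem_univ j)
  rcases eq_or_ne d ⊥ with hb | hb
  · exact le_trans (hjd.trans_eq hb) bot_le
  -- d = some n
  obtain ⟨n, hn'⟩ := WithBot.ne_bot_iff_exists.mp hb
  have hn : d = (n : WithBot ℕ) := hn'.symm
  -- achiever set
  set S : Finset (Fin m) := Finset.univ.filter fun i => D i = d with hS
  have hSne : S.Nonempty := by
    obtain ⟨i, _, hi⟩ := Finset.exists_mem_eq_sup (Finset.univ : Finset (Fin m))
      (Finset.univ_nonempty_iff.mpr ⟨j⟩) D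
    · exact ⟨i, by simp [hS, hi.symm, hd]⟩
  have hmne : Nonempty (Fin m) := ⟨j⟩
  obtain ⟨i₀, hi₀S, hi₀max⟩ := Finset.exists_max_image S (fun i => leadPos (V i)) hSne
  have hDi₀ : D i₀ = d := (Finset.mem_filter.mp hi₀S).2
  have hDi₀' : (u i₀).degree + vecDeg (V i₀) = d := hDi₀
  have hVi₀ : vecDeg (V i₀) ≠ ⊥ := by
    intro h
    rw [h, WithBot.add_bot] at hDi₀'
    exact hb hDi₀'.symm
  obtain ⟨p, hp, hpdeg⟩ := exists_leadPos (V i₀) hVi₀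
  -- coefficient of X^n in position p
  have hcoeff : (∑ i, u i * V i p).coeff n ≠ 0 := by
    rw [finset_sum_coeff]
    rw [Finset.sum_eq_single i₀]
    · apply coeff_ne_zero_of_eq_degree
      rw [degree_mul, hpdeg]
      exact hDi₀'.trans hn
    · intro i _ hii₀
      apply coeff_eq_zero_of_degree_lt
      rw [degree_mul]
      have h1 : (V i p).degree ≤ vecDeg (V i) := degree_le_vecDeg _ p
      have h2 : (u i).degree + (V i p).degree ≤ D i :=
        add_le_add_right h1 _
      have h3 : D i ≤ d := Finset.le_sup (Finset.mem_univ i)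
      rw [← hn]
      rcases lt_or_eq_of_le (h2.trans h3) with hlt | heq
      · exact hlt
      · -- derive contradiction
        exfalso
        have hDi : D i = d := le_antisymm h3 (heq ▸ h2)
        have hDi' : (u i).degree + vecDeg (V i) = d := hDi
        have hub : (u i).degree ≠ ⊥ := by
          intro h
          rw [h, WithBot.bot_add] at hDi'
          exact hb hDi'.symm
        have hVip : (V i p).degree = vecDeg (V i) := by
          have : (u i).degree + (V i p).degree = (u i).degree + vecDeg (V i) := by
            rw [heq]; exact hDi'.symm
          exact WithBot.add_left_cancel hub this
        have hple : (p : ℕ) ≤ leadPos (V i) := le_leadPos hVip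
        have hiS : i ∈ S := by simp [hS, hDi]
        have : leadPos (V i) ≤ leadPos (V i₀) := hi₀max i hiS
        have hne' : leadPos (V i) ≠ leadPos (V i₀) := fun h => hii₀ (hV h)
        omega
    · intro h; exact absurd (Finset.mem_univ i₀) h
  have hgoal : (n : WithBot ℕ) ≤ vecDeg (fun p => ∑ i, u i * V i p) :=
    le_trans (le_degree_of_ne_zero hcoeff) (degree_le_vecDeg (fun q => ∑ i, u i * V i q) p)
  exact le_trans hjd (hn.trans_le hgoal)

lemma vecDegNat_le_of_vecDeg_le {F : Type*} [Field F] {m : ℕ}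
    {v w : Fin m → Polynomial F} (h : vecDeg v ≤ vecDeg w) : vecDegNat v ≤ vecDegNat w := by
  apply Finset.sup_le
  intro j _
  by_cases hv : v j = 0
  · simp [hv]
  · have h1 : ((v j).natDegree : WithBot ℕ) = (v j).degree := (degree_eq_natDegree hv).symm
    have h2 : ((v j).natDegree : WithBot ℕ) ≤ vecDeg w :=
      h1.trans_le ((degree_le_vecDeg v j).trans h)
    simp only [vecDeg] at h2
    rw [Finset.le_sup_iff (WithBot.bot_lt_coe _)] at h2
    obtain ⟨k, _, hk⟩ := h2
    have : (v j).natDegree ≤ (w k).natDegree := by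
      by_cases hw : w k = 0
      · simp [hw, degree_zero] at hk
      · rwa [degree_eq_natDegree hw, Nat.cast_le] at hk
    exact this.trans (Finset.le_sup (f := fun j => (w j).natDegree) (Finset.mem_univ k))

/-- A nonsingular square matrix V over F[X] in weak Popov form has minimal
row-degree sum among all matrices unimodular-equivalent to it: for any invertible
(unimodular) matrix U over F[X], deg(UV) ≥ deg V. -/
theorem statement6 {F : Type*} [Field F] [Fintype F] {m : ℕ}
    (V : Matrix (Fin m) (Fin m) (Polynomial F))
    (hdet : V.det ≠ 0) (hV : WeakPopov V)
    (U : Matrix (Fin m) (Fin m) (Polynomial F)) (hU : IsUnit U) :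
    matDegNat V ≤ matDegNat (U * V) := by
  -- find a permutation σ with U (σ i) i ≠ 0 for all i
  have hUdet : U.det ≠ 0 := ((Matrix.isUnit_iff_isUnit_det U).mp hU).ne_zero
  have : ∃ σ : Equiv.Perm (Fin m), ∀ i, U (σ i) i ≠ 0 := by
    by_contra hc
    push_neg at hc
    apply hUdet
    rw [Matrix.det_apply']
    apply Finset.sum_eq_zero
    intro σ _
    obtain ⟨i, hi⟩ := hc σ
    exact mul_eq_zero_of_right _ (Finset.prod_eq_zero (Finset.mem_univ i) hi)
  obtain ⟨σ, hσ⟩ := this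
  -- for each row r, vecDeg ((U*V) r) ≥ vecDeg (V (σ⁻¹ r))
  have hrow : ∀ r : Fin m, vecDegNat (V (σ.symm r)) ≤ vecDegNat ((U * V) r) := by
    intro r
    apply vecDegNat_le_of_vecDeg_le
    have hkey := key V hV (fun i => U r i) (σ.symm r)
    have hUne : U r (σ.symm r) ≠ 0 := by
      have := hσ (σ.symm r)
      rwa [Equiv.apply_symm_apply] at this
    have h0 : (0 : WithBot ℕ) ≤ (U r (σ.symm r)).degree :=
      Polynomial.zero_le_degree_iff.mpr hUne
    calc vecDeg (V (σ.symm r)) = 0 + vecDeg (V (σ.symm r)) := (zero_add _).symm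
      _ ≤ (U r (σ.symm r)).degree + vecDeg (V (σ.symm r)) := add_le_add_left h0 _
      _ ≤ vecDeg (fun p => ∑ i, U r i * V i p) := hkey
      _ = vecDeg ((U * V) r) := by
          have harg : (fun p => ∑ i, U r i * V i p) = (U * V) r := by
            funext p; rw [Matrix.mul_apply]
          rw [harg]
  calc matDegNat V = ∑ r, vecDegNat (V (σ.symm r)) := (Equiv.sum_comp σ.symm _).symm
    _ ≤ ∑ r, vecDegNat ((U * V) r) := Finset.sum_le_sum fun r _ => hrow r
    _ = matDegNat (U * V) := rfl
end

section
/- In the determinant expansion of a square matrix V over F_q[X] in weak Popov form, the term corresponding to the permutation σ with σ(i) = LP(v_i) for all rows i has degree strictly greater than the degree of the term of any other permutation; consequently deg det V = Σ_i deg LT(v_i). -/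
open Polynomial

open scoped Classical

/-- For a square matrix V in weak Popov form (nonzero rows), the
determinant term of the permutation σ with σ(i) = LP(v_i) has degree strictly greater
than the term of any other permutation; consequently deg det V = Σ_i deg LT(v_i). -/
theorem statement7 {F : Type*} [Field F] [Fintype F] {m : ℕ}
    (V : Matrix (Fin m) (Fin m) (Polynomial F))
    (hrows : ∀ i, V i ≠ 0) (hV : WeakPopov V)
    (σ : Equiv.Perm (Fin m)) (hσ : ∀ i, (σ i : ℕ) = leadPos (V i)) :
    (∀ π : Equiv.Perm (Fin m), π ≠ σ →
        (∏ i, V i (π i)).degree < (∏ i, V i (σ i)).degree) ∧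
      V.det.degree = ∑ i, (V i (σ i)).degree := by
  -- basic facts about the leading position
  have hσdeg : ∀ i, (V i (σ i)).degree = vecDeg (V i) := by
    intro i
    have hne : Nonempty (Fin m) := ⟨i⟩
    obtain ⟨j, hj, hjdeg⟩ := Finset.exists_mem_eq_sup Finset.univ Finset.univ_nonempty
      (fun j => (V i j).degree)
    have hjf : j ∈ Finset.univ.filter fun j : Fin m => (V i j).degree = vecDeg (V i) := by
      exact Finset.mem_filter.mpr ⟨Finset.mem_univ j, hjdeg.symm⟩
    obtain ⟨j', hj', hj'c⟩ := Finset.exists_mem_eq_sup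
      (Finset.univ.filter fun j : Fin m => (V i j).degree = vecDeg (V i)) ⟨j, hjf⟩
      (fun j : Fin m => (j : ℕ))
    have hσj' : σ i = j' := by
      apply Fin.ext
      rw [hσ i, leadPos, hj'c]
    rw [hσj']
    exact (Finset.mem_filter.mp hj').2
  have hσne : ∀ i, V i (σ i) ≠ 0 := by
    intro i
    obtain ⟨j, hj⟩ := Function.ne_iff.mp (hrows i)
    intro h0
    have h1 : (V i j).degree ≤ vecDeg (V i) := Finset.le_sup (f := fun j => (V i j).degree) (Finset.mem_univ j)
    rw [← hσdeg i, h0, degree_zero, le_bot_iff, degree_eq_bot] at h1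
    exact hj h1
  have hmax : ∀ i j, (V i j).degree = vecDeg (V i) → (j : ℕ) ≤ (σ i : ℕ) := by
    intro i j hj
    rw [hσ i]
    exact Finset.le_sup (f := fun j : Fin m => (j : ℕ)) (Finset.mem_filter.mpr ⟨Finset.mem_univ j, hj⟩)
  have hle : ∀ i j, (V i j).degree ≤ (V i (σ i)).degree := by
    intro i j
    rw [hσdeg i]
    exact Finset.le_sup (f := fun j => (V i j).degree) (Finset.mem_univ j)
  have hprodσ : (∏ i, V i (σ i)) ≠ 0 := Finset.prod_ne_zero_iff.mpr fun i _ => hσne i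
  have hdegprod : ∀ (τ : Equiv.Perm (Fin m)), (∀ i, V i (τ i) ≠ 0) →
      (∏ i, V i (τ i)).degree = ((∑ i, (V i (τ i)).natDegree : ℕ) : WithBot ℕ) := by
    intro τ hτ
    rw [Polynomial.degree_prod, Nat.cast_sum]
    exact Finset.sum_congr rfl fun i _ => degree_eq_natDegree (hτ i)
  -- Part 1
  have part1 : ∀ π : Equiv.Perm (Fin m), π ≠ σ →
      (∏ i, V i (π i)).degree < (∏ i, V i (σ i)).degree := by
    intro π hπ
    by_cases hz : ∀ i, V i (π i) ≠ 0
    · -- all entries nonzero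
      by_cases hall : ∀ i, (V i (π i)).degree = vecDeg (V i)
      · -- would force π = σ
        exfalso
        apply hπ
        have hlec : ∀ i, (π i : ℕ) ≤ (σ i : ℕ) := fun i => hmax i _ (hall i)
        have hsum : ∑ i, (π i : ℕ) = ∑ i, (σ i : ℕ) := by
          rw [Equiv.sum_comp π (fun j : Fin m => (j : ℕ)),
            Equiv.sum_comp σ (fun j : Fin m => (j : ℕ))]
        have heq := (Finset.sum_eq_sum_iff_of_le (fun i _ => hlec i)).mp hsum
        ext i
        exact heq i (Finset.mem_univ i)
      · push_neg at hall
        obtain ⟨i₀, hi₀⟩ := hall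
        have hlt₀ : (V i₀ (π i₀)).degree < (V i₀ (σ i₀)).degree :=
          lt_of_le_of_ne (hle i₀ (π i₀)) (by rw [hσdeg i₀]; exact hi₀)
        have key : ∑ i, (V i (π i)).natDegree < ∑ i, (V i (σ i)).natDegree := by
          apply Finset.sum_lt_sum
          · intro i _
            exact Polynomial.natDegree_le_natDegree (hle i (π i))
          · exact ⟨i₀, Finset.mem_univ i₀,
              Polynomial.natDegree_lt_natDegree (hz i₀) hlt₀⟩
        rw [hdegprod π hz, hdegprod σ hσne]
        exact_mod_cast key
    · push_neg at hz
      obtain ⟨i₀, hi₀⟩ := hz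
      have : (∏ i, V i (π i)) = 0 := Finset.prod_eq_zero (Finset.mem_univ i₀) hi₀
      rw [this, degree_zero]
      exact Ne.bot_lt fun h => hprodσ (degree_eq_bot.mp h)
  refine ⟨part1, ?_⟩
  -- Part 2
  have hsmuldeg : ∀ (u : ℤˣ) (p : Polynomial F), (u • p).degree = p.degree := by
    intro u p
    rcases Int.units_eq_one_or u with h | h <;>
      simp [h, Units.smul_def]
  have hdet : V.det = ∑ π : Equiv.Perm (Fin m), Equiv.Perm.sign π • ∏ i, V i (π i) := by
    rw [← Matrix.det_transpose, Matrix.det_apply]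
    exact Finset.sum_congr rfl fun π _ => by simp [Matrix.transpose_apply]
  have hmainne : ((Equiv.Perm.sign σ : ℤˣ) • ∏ i, V i (σ i)).degree ≠ ⊥ := by
    rw [hsmuldeg]
    exact fun h => hprodσ (degree_eq_bot.mp h)
  have hrest : (∑ π ∈ Finset.univ.erase σ,
      (Equiv.Perm.sign π : ℤˣ) • ∏ i, V i (π i)).degree
      < ((Equiv.Perm.sign σ : ℤˣ) • ∏ i, V i (σ i)).degree := by
    refine lt_of_le_of_lt (Polynomial.degree_sum_le _ _) ?_
    rw [Finset.sup_lt_iff (Ne.bot_lt hmainne)]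
    intro π hπ
    rw [hsmuldeg, hsmuldeg]
    exact part1 π (Finset.ne_of_mem_erase hπ)
  have : V.det.degree = ((Equiv.Perm.sign σ : ℤˣ) • ∏ i, V i (σ i)).degree := by
    rw [hdet, ← Finset.sum_erase_add _ _ (Finset.mem_univ σ)]
    exact Polynomial.degree_add_eq_right_of_degree_lt hrest
  rw [this, hsmuldeg, Polynomial.degree_prod]
end

section
/- Let B be an (ℓ+1)×(ℓ+1) matrix over F_q[X] such that B·W_ℓ is in weak Popov form, and suppose deg R ≥ k (the received word is not a codeword). Form the (ℓ+2)×(ℓ+2) matrix C by appending a zero column to the right of B and then appending the row (0,…,0, binom(s,0)(−R)^s, binom(s,1)(−R)^{s−1}, …, binom(s,s)) with the (−R)^s entry in column ℓ+1−s. Then the orthogonality defect of C·W_{ℓ+1} equals s(deg R − k + 1), which is at most s(n−k). -/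
open Polynomial

open scoped Classical

/-- The matrix C^I of micro-step type I: B extended with a zero column on the right and
the extra row (0,…,0, (−R)^s, C(s,1)(−R)^{s−1}, …, 1), whose (−R)^s entry sits in
column ℓ+1−s. -/
noncomputable def stepIMat {F : Type*} [Field F] (ℓ s : ℕ)
    (B : Matrix (Fin (ℓ + 1)) (Fin (ℓ + 1)) (Polynomial F)) (R : Polynomial F) :
    Matrix (Fin (ℓ + 2)) (Fin (ℓ + 2)) (Polynomial F) :=
  Matrix.of fun i j =>
    if hi : (i : ℕ) < ℓ + 1 then
      if hj : (j : ℕ) < ℓ + 1 then B ⟨(i : ℕ), hi⟩ ⟨(j : ℕ), hj⟩ else 0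
    else
      if ℓ + 1 - s ≤ (j : ℕ) then
        (s.choose ((j : ℕ) - (ℓ + 1 - s)) : Polynomial F) *
          (-R) ^ (s - ((j : ℕ) - (ℓ + 1 - s)))
      else 0

section AuxSection

variable {F : Type*} [Field F]

lemma coeff_prod_deg {ι : Type*} (s : Finset ι) (f : ι → Polynomial F) (n : ι → ℕ)
    (h : ∀ i ∈ s, (f i).natDegree ≤ n i) :
    (∏ i ∈ s, f i).coeff (∑ i ∈ s, n i) = ∏ i ∈ s, (f i).coeff (n i) := by
  induction s using Finset.cons_induction with
  | empty => simp
  | cons a s ha ih =>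
    rw [Finset.prod_cons, Finset.sum_cons, Finset.prod_cons,
      coeff_mul_add_eq_of_natDegree_le (h a (Finset.mem_cons_self a s))
        ((natDegree_prod_le s f).trans (Finset.sum_le_sum fun i hi => h i (Finset.mem_cons_of_mem hi))),
      ih fun i hi => h i (Finset.mem_cons_of_mem hi)]

lemma natDegree_entry_le {m : ℕ} (V : Matrix (Fin m) (Fin m) (Polynomial F)) (i j : Fin m) :
    (V i j).natDegree ≤ vecDegNat (V i) := by
  exact Finset.le_sup (f := fun j => (V i j).natDegree) (Finset.mem_univ j)

lemma natDegree_det_le {m : ℕ} (V : Matrix (Fin m) (Fin m) (Polynomial F)) :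
    V.det.natDegree ≤ matDegNat V := by
  rw [Matrix.det_apply']
  refine natDegree_sum_le_of_forall_le _ _ fun σ _ => ?_
  refine (natDegree_mul_le).trans ?_
  have h1 : ((Equiv.Perm.sign σ : ℤ) : Polynomial F).natDegree = 0 := by
    rcases Int.units_eq_one_or (Equiv.Perm.sign σ) with h | h <;>
      simp [h]
  rw [h1, zero_add]
  refine (natDegree_prod_le _ _).trans ?_
  have : matDegNat V = ∑ i, vecDegNat (V (σ i)) := (Equiv.sum_comp σ fun i => vecDegNat (V i)).symm
  rw [this]
  exact Finset.sum_le_sum fun i _ => natDegree_entry_le V (σ i) i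

lemma vecDeg_eq_nat {m : ℕ} (v : Fin m → Polynomial F) (hv : ∃ j, v j ≠ 0) :
    vecDeg v = (vecDegNat v : WithBot ℕ) := by
  obtain ⟨j0, hj0⟩ := hv
  apply le_antisymm
  · refine Finset.sup_le fun j _ => ?_
    exact (degree_le_natDegree).trans (by
      exact_mod_cast Nat.cast_le.mpr (Finset.le_sup (f := fun j => (v j).natDegree)
        (Finset.mem_univ j)))
  · obtain ⟨j1, -, h1⟩ := Finset.exists_mem_eq_sup Finset.univ ⟨j0, Finset.mem_univ j0⟩
      (fun j => (v j).natDegree)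
    by_cases hz : v j1 = 0
    · have h0 : vecDegNat v = 0 := by
        rw [vecDegNat, h1, hz, natDegree_zero]
      rw [h0]
      have : (v j0).natDegree = 0 := by
        have h2 : (v j0).natDegree ≤ vecDegNat v :=
          Finset.le_sup (f := fun j => (v j).natDegree) (Finset.mem_univ j0)
        omega
      calc ((0:ℕ) : WithBot ℕ) = (v j0).degree := by
            rw [degree_eq_natDegree hj0, this]
        _ ≤ vecDeg v := Finset.le_sup (f := fun j => (v j).degree) (Finset.mem_univ j0)
    · have h1' : vecDegNat v = (v j1).natDegree := h1
      calc ((vecDegNat v : ℕ) : WithBot ℕ) = (v j1).degree := by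
            rw [degree_eq_natDegree hz, ← h1']
        _ ≤ vecDeg v := Finset.le_sup (f := fun j => (v j).degree) (Finset.mem_univ j1)

lemma pivot_spec {m : ℕ} (v : Fin m → Polynomial F) (hv : ∃ j, v j ≠ 0) :
    ∃ p : Fin m, (p : ℕ) = leadPos v ∧ (v p).coeff (vecDegNat v) ≠ 0 ∧
      ∀ j : Fin m, (p : ℕ) < (j : ℕ) → (v j).coeff (vecDegNat v) = 0 := by
  obtain ⟨j0, hj0⟩ := hv
  have hdeg := vecDeg_eq_nat v ⟨j0, hj0⟩
  set P := Finset.univ.filter fun j : Fin m => (v j).degree = vecDeg v with hPdef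
  have hP : P.Nonempty := by
    obtain ⟨j2, -, h2⟩ := Finset.exists_mem_eq_sup Finset.univ ⟨j0, Finset.mem_univ j0⟩
      (fun j => (v j).degree)
    exact ⟨j2, Finset.mem_filter.mpr ⟨Finset.mem_univ j2, h2.symm⟩⟩
  obtain ⟨p, hpP, hps⟩ := Finset.exists_mem_eq_sup P hP (fun j => (j : ℕ))
  have hpdeg : (v p).degree = vecDeg v := (Finset.mem_filter.mp hpP).2
  have hvp : v p ≠ 0 := by
    intro h
    rw [h, degree_zero, hdeg] at hpdeg
    exact (by simp : ((vecDegNat v : ℕ) : WithBot ℕ) ≠ ⊥) hpdeg.symm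
  have hnd : (v p).natDegree = vecDegNat v := by
    have := hpdeg.trans hdeg
    exact natDegree_eq_of_degree_eq_some this
  refine ⟨p, hps.symm, ?_, ?_⟩
  · rw [← hnd]
    exact (leadingCoeff_ne_zero.mpr hvp)
  · intro j hj
    apply coeff_eq_zero_of_degree_lt
    rw [← hdeg]
    refine lt_of_le_of_ne (Finset.le_sup (f := fun j => (v j).degree) (Finset.mem_univ j)) ?_
    intro hcon
    have : j ∈ P := Finset.mem_filter.mpr ⟨Finset.mem_univ j, hcon⟩
    have h3 := Finset.le_sup (f := fun j : Fin m => (j : ℕ)) this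
    rw [hps] at h3
    omega

lemma coeff_det_eq {m : ℕ} (V : Matrix (Fin m) (Fin m) (Polynomial F)) :
    V.det.coeff (matDegNat V) =
      (Matrix.of fun i j => (V i j).coeff (vecDegNat (V i))).det := by
  rw [Matrix.det_apply', Matrix.det_apply', finset_sum_coeff]
  refine Finset.sum_congr rfl fun σ _ => ?_
  have hc : (((Equiv.Perm.sign σ : ℤ) : Polynomial F) * ∏ i, V (σ i) i).coeff (matDegNat V) =
      ((Equiv.Perm.sign σ : ℤ) : F) * (∏ i, V (σ i) i).coeff (matDegNat V) := by
    rw [← Polynomial.C_eq_intCast, coeff_C_mul]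
  rw [hc]
  have hsum : matDegNat V = ∑ i, vecDegNat (V (σ i)) :=
    (Equiv.sum_comp σ fun i => vecDegNat (V i)).symm
  rw [hsum, coeff_prod_deg _ _ _ fun i _ => natDegree_entry_le V (σ i) i]
  simp [Matrix.of_apply]

lemma weakPopov_natDegree_det {m : ℕ} (V : Matrix (Fin m) (Fin m) (Polynomial F))
    (hrows : ∀ i, ∃ j, V i j ≠ 0) (hWP : WeakPopov V) :
    V.det.natDegree = matDegNat V ∧ V.det ≠ 0 := by
  classical
  set LC : Matrix (Fin m) (Fin m) F :=
    Matrix.of fun i j => (V i j).coeff (vecDegNat (V i)) with hLC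
  choose p hp1 hp2 hp3 using fun i => pivot_spec (V i) (hrows i)
  have hinj : Function.Injective p := by
    intro i j hij
    apply hWP
    simp only []
    rw [← hp1 i, ← hp1 j, hij]
  have hbij : Function.Bijective p := (Finite.injective_iff_bijective).mp hinj
  let σ : Equiv.Perm (Fin m) := Equiv.ofBijective p hbij
  have hσ : ∀ i, σ i = p i := fun i => rfl
  have hdetLC : LC.det ≠ 0 := by
    have htri : (LC.submatrix σ.symm id).BlockTriangular OrderDual.toDual := by
      intro i j hlt
      have hlt' : (i : ℕ) < (j : ℕ) := hlt
      simp only [Matrix.submatrix_apply, id, hLC, Matrix.of_apply]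
      apply hp3
      have : p (σ.symm i) = i := by rw [← hσ]; exact σ.apply_symm_apply i
      rw [this]
      exact hlt'
    have hdet := Matrix.det_of_lowerTriangular _ htri
    have hdiag : ∀ i, (LC.submatrix σ.symm id) i i ≠ 0 := by
      intro i
      simp only [Matrix.submatrix_apply, id, hLC, Matrix.of_apply]
      have : p (σ.symm i) = i := by rw [← hσ]; exact σ.apply_symm_apply i
      nth_rewrite 2 [← this]
      exact hp2 (σ.symm i)
    have hne : (LC.submatrix σ.symm id).det ≠ 0 := by
      rw [hdet]
      exact Finset.prod_ne_zero_iff.mpr fun i _ => hdiag i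
    intro h
    rw [Matrix.det_permute, h, mul_zero] at hne
    exact hne rfl
  have hcoeff : V.det.coeff (matDegNat V) ≠ 0 := by
    rw [coeff_det_eq]; exact hdetLC
  have hge : matDegNat V ≤ V.det.natDegree := le_natDegree_of_ne_zero hcoeff
  have hne0 : V.det ≠ 0 := fun h => hcoeff (by simp [h])
  exact ⟨le_antisymm (natDegree_det_le V) hge, hne0⟩

end AuxSection

/-- If B·W_ℓ is in weak Popov form and deg R ≥ k, then the orthogonality
defect of C^I·W_{ℓ+1} equals s(deg R − k + 1), which is at most s(n−k). -/
theorem statement11 {F : Type*} [Field F] [Fintype F] {n k s ℓ : ℕ}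
    (hk : 1 ≤ k) (hkn : k ≤ n) (hs : 1 ≤ s) (hsℓ : s ≤ ℓ)
    (R : Polynomial F) (hRn : R.natDegree < n) (hRk : k ≤ R.natDegree)
    (B : Matrix (Fin (ℓ + 1)) (Fin (ℓ + 1)) (Polynomial F))
    (hB : B.det ≠ 0) (hWP : WeakPopov (B * Wmat F k ℓ)) :
    matDegNat (stepIMat ℓ s B R * Wmat F k (ℓ + 1)) =
        (stepIMat ℓ s B R * Wmat F k (ℓ + 1)).det.natDegree +
          s * (R.natDegree - k + 1) ∧
      s * (R.natDegree - k + 1) ≤ s * (n - k) := by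
  have hR0 : R ≠ 0 := fun h => by simp [h] at hRk; omega
  have hkd : k - 1 ≤ R.natDegree := by omega
  set M := B * Wmat F k ℓ with hM
  set C := stepIMat ℓ s B R with hC
  set CW := stepIMat ℓ s B R * Wmat F k (ℓ + 1) with hCWdef
  -- entry formulas
  have hMe : ∀ (i j : Fin (ℓ+1)), M i j = B i j * X ^ ((j:ℕ)*(k-1)) := by
    intro i j; rw [hM, Wmat, Matrix.mul_diagonal]
  have hCWe : ∀ (i j : Fin (ℓ+2)), CW i j = C i j * X ^ ((j:ℕ)*(k-1)) := by
    intro i j; rw [hCWdef, Wmat, Matrix.mul_diagonal, hC]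
  have hCtop : ∀ (i j : Fin (ℓ+1)), C i.castSucc j.castSucc = B i j := by
    intro i j
    simp only [hC, stepIMat, Matrix.of_apply, Fin.coe_castSucc]
    rw [dif_pos i.isLt, dif_pos j.isLt]
  have hClast : ∀ i : Fin (ℓ+1), C i.castSucc (Fin.last (ℓ+1)) = 0 := by
    intro i
    simp only [hC, stepIMat, Matrix.of_apply, Fin.coe_castSucc, Fin.val_last]
    rw [dif_pos i.isLt, dif_neg (lt_irrefl (ℓ+1))]
  have hCbot : ∀ j : Fin (ℓ+2), C (Fin.last (ℓ+1)) j =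
      if ℓ+1-s ≤ (j:ℕ) then ((s.choose ((j:ℕ) - (ℓ+1-s)) : Polynomial F) *
        (-R)^(s - ((j:ℕ)-(ℓ+1-s)))) else 0 := by
    intro j
    simp only [hC, stepIMat, Matrix.of_apply, Fin.val_last]
    rw [dif_neg (lt_irrefl (ℓ+1))]
  -- row degrees of top rows
  have hrowdeg : ∀ i : Fin (ℓ+1), vecDegNat (CW i.castSucc) = vecDegNat (M i) := by
    intro i
    have key : ∀ j : Fin (ℓ+1), CW i.castSucc j.castSucc = M i j := by
      intro j
      rw [hCWe, hCtop, hMe, Fin.coe_castSucc]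
    apply le_antisymm
    · refine Finset.sup_le fun j _ => ?_
      induction j using Fin.lastCases with
      | last =>
        rw [hCWe, hClast, zero_mul, natDegree_zero]
        exact Nat.zero_le _
      | cast j =>
        rw [key]
        exact Finset.le_sup (f := fun j => (M i j).natDegree) (Finset.mem_univ j)
    · refine Finset.sup_le fun j _ => ?_
      rw [← key]
      exact Finset.le_sup (f := fun j => (CW i.castSucc j).natDegree)
        (Finset.mem_univ j.castSucc)
  -- degree of last row
  have hlastdeg : vecDegNat (CW (Fin.last (ℓ+1))) = s * R.natDegree + (ℓ+1-s)*(k-1) := by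
    apply le_antisymm
    · refine Finset.sup_le fun j _ => ?_
      rw [hCWe, hCbot]
      by_cases hj : ℓ + 1 - s ≤ (j : ℕ)
      · rw [if_pos hj]
        set t := (j : ℕ) - (ℓ + 1 - s) with htdef
        have ht : t ≤ s := by have := j.isLt; omega
        have hjval : (j : ℕ) = (ℓ + 1 - s) + t := by omega
        calc ((s.choose t : Polynomial F) * (-R) ^ (s - t) * X ^ ((j:ℕ)*(k-1))).natDegree
            ≤ ((s.choose t : Polynomial F) * (-R) ^ (s - t)).natDegree + (X ^ ((j:ℕ)*(k-1)) : Polynomial F).natDegree := natDegree_mul_le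
          _ ≤ ((s.choose t : Polynomial F).natDegree + ((-R) ^ (s - t)).natDegree) + (j:ℕ)*(k-1) := by
              rw [natDegree_X_pow]
              exact Nat.add_le_add_right natDegree_mul_le _
          _ ≤ (s - t) * R.natDegree + (j:ℕ)*(k-1) := by
              rw [natDegree_natCast, natDegree_pow, natDegree_neg, zero_add]
          _ ≤ s * R.natDegree + (ℓ+1-s)*(k-1) := by
              rw [hjval, Nat.add_mul]
              have h1 : t * (k-1) ≤ t * R.natDegree := Nat.mul_le_mul_left t hkd
              have h2 : (s - t) * R.natDegree + t * R.natDegree = s * R.natDegree := by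
                rw [← Nat.add_mul, Nat.sub_add_cancel ht]
              calc (s - t) * R.natDegree + ((ℓ+1-s)*(k-1) + t*(k-1))
                  ≤ (s - t) * R.natDegree + ((ℓ+1-s)*(k-1) + t*R.natDegree) := by
                    exact Nat.add_le_add_left (Nat.add_le_add_left h1 _) _
                _ = s * R.natDegree + (ℓ+1-s)*(k-1) := by omega
      · rw [if_neg hj, zero_mul, natDegree_zero]
        exact Nat.zero_le _
    · have hjlt : ℓ + 1 - s < ℓ + 2 := by omega
      set j0 : Fin (ℓ+2) := ⟨ℓ + 1 - s, hjlt⟩ with hj0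
      have hentry : CW (Fin.last (ℓ+1)) j0 = (-R) ^ s * X ^ ((ℓ+1-s)*(k-1)) := by
        rw [hCWe, hCbot]
        have : (j0 : ℕ) = ℓ + 1 - s := rfl
        rw [this, if_pos le_rfl, Nat.sub_self, Nat.choose_zero_right, Nat.sub_zero,
          Nat.cast_one, one_mul]
      have hne : ((-R) ^ s * X ^ ((ℓ+1-s)*(k-1)) : Polynomial F) ≠ 0 :=
        mul_ne_zero (pow_ne_zero _ (neg_ne_zero.mpr hR0)) (pow_ne_zero _ X_ne_zero)
      have hdeg0 : ((-R) ^ s * X ^ ((ℓ+1-s)*(k-1)) : Polynomial F).natDegree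
          = s * R.natDegree + (ℓ+1-s)*(k-1) := by
        rw [natDegree_mul (pow_ne_zero _ (neg_ne_zero.mpr hR0)) (pow_ne_zero _ X_ne_zero),
          natDegree_pow, natDegree_neg, natDegree_X_pow]
      calc s * R.natDegree + (ℓ+1-s)*(k-1) = (CW (Fin.last (ℓ+1)) j0).natDegree := by
            rw [hentry, hdeg0]
        _ ≤ _ := Finset.le_sup (f := fun j => (CW (Fin.last (ℓ+1)) j).natDegree)
            (Finset.mem_univ j0)
  -- determinant of C
  have hdetC : C.det = B.det := by
    let e : Fin (ℓ+1) ⊕ Fin 1 ≃ Fin (ℓ+2) := finSumFinEquiv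
    have hsub : C.submatrix e e =
        Matrix.fromBlocks B 0 (Matrix.of fun (_ : Fin 1) (j : Fin (ℓ+1)) =>
          C (Fin.last (ℓ+1)) j.castSucc) 1 := by
      ext i j
      have he1 : ∀ i : Fin (ℓ+1), e (Sum.inl i) = i.castSucc := by
        intro i
        have h := finSumFinEquiv_apply_left (n := 1) i
        apply Fin.ext
        rw [show e (Sum.inl i) = Fin.castAdd 1 i from h]
        simp
      have he2 : ∀ i : Fin 1, e (Sum.inr i) = Fin.last (ℓ+1) := by
        intro i
        have h := finSumFinEquiv_apply_right (m := ℓ+1) i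
        have hi0 : (i : ℕ) = 0 := by omega
        apply Fin.ext
        rw [show e (Sum.inr i) = Fin.natAdd (ℓ+1) i from h]
        simp [hi0]
      cases i with
      | inl i =>
        cases j with
        | inl j =>
          rw [Matrix.submatrix_apply, he1, he1, hCtop]
          rfl
        | inr j =>
          rw [Matrix.submatrix_apply, he1, he2, hClast]
          rfl
      | inr i =>
        cases j with
        | inl j =>
          rw [Matrix.submatrix_apply, he2, he1]
          rfl
        | inr j =>
          rw [Matrix.submatrix_apply, he2, he2]
          have hlast : C (Fin.last (ℓ+1)) (Fin.last (ℓ+1)) = 1 := by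
            rw [hCbot]
            have h1 : ℓ + 1 - s ≤ ((Fin.last (ℓ+1) : Fin (ℓ+2)) : ℕ) := by
              simp only [Fin.val_last]; omega
            rw [if_pos h1]
            have h2 : ((Fin.last (ℓ+1) : Fin (ℓ+2)) : ℕ) - (ℓ + 1 - s) = s := by
              simp only [Fin.val_last]; omega
            rw [h2, Nat.choose_self, Nat.sub_self, pow_zero, Nat.cast_one, one_mul]
          rw [hlast]
          have : i = j := Subsingleton.elim i j
          rw [this, Matrix.fromBlocks_apply₂₂, Matrix.one_apply_eq]
    calc C.det = (C.submatrix e e).det := (Matrix.det_submatrix_equiv_self e C).symm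
      _ = B.det * (1 : Matrix (Fin 1) (Fin 1) (Polynomial F)).det := by
          rw [hsub, Matrix.det_fromBlocks_zero₁₂]
      _ = B.det := by rw [Matrix.det_one, mul_one]
  -- determinants with weights
  have hdetW : ∀ ℓ' : ℕ, (Wmat F k ℓ').det = X ^ (∑ i : Fin (ℓ'+1), (i:ℕ)*(k-1)) := by
    intro ℓ'
    rw [Wmat, Matrix.det_diagonal, Finset.prod_pow_eq_pow_sum]
  have hdetM : M.det = B.det * X ^ (∑ i : Fin (ℓ+1), (i:ℕ)*(k-1)) := by
    rw [hM, Matrix.det_mul, hdetW]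
  have hdetCW : CW.det = B.det * X ^ (∑ i : Fin (ℓ+2), (i:ℕ)*(k-1)) := by
    rw [hCWdef, Matrix.det_mul, ← hC, hdetC, hdetW]
  have hMdet0 : M.det ≠ 0 := by
    rw [hdetM]; exact mul_ne_zero hB (pow_ne_zero _ X_ne_zero)
  have hMrows : ∀ i, ∃ j, M i j ≠ 0 := by
    intro i
    by_contra h
    push_neg at h
    exact hMdet0 (Matrix.det_eq_zero_of_row_eq_zero i h)
  obtain ⟨hMdeg, -⟩ := weakPopov_natDegree_det M hMrows hWP
  -- natDegrees of determinants
  have hndM : M.det.natDegree = B.det.natDegree + (∑ i : Fin (ℓ+1), (i:ℕ)*(k-1)) := by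
    rw [hdetM, natDegree_mul hB (pow_ne_zero _ X_ne_zero), natDegree_X_pow]
  have hndCW : CW.det.natDegree = B.det.natDegree + (∑ i : Fin (ℓ+2), (i:ℕ)*(k-1)) := by
    rw [hdetCW, natDegree_mul hB (pow_ne_zero _ X_ne_zero), natDegree_X_pow]
  have hEsum : (∑ i : Fin (ℓ+2), (i:ℕ)*(k-1)) =
      (∑ i : Fin (ℓ+1), (i:ℕ)*(k-1)) + (ℓ+1)*(k-1) := by
    rw [Fin.sum_univ_castSucc]
    simp
  have hmd : matDegNat CW = matDegNat M + (s * R.natDegree + (ℓ+1-s)*(k-1)) := by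
    rw [matDegNat, Fin.sum_univ_castSucc, hlastdeg]
    congr 1
    exact Finset.sum_congr rfl fun i _ => hrowdeg i
  constructor
  · rw [hmd, ← hMdeg, hndM, hndCW, hEsum]
    -- pure arithmetic
    obtain ⟨u, rfl⟩ : ∃ u, k = u + 1 := ⟨k - 1, by omega⟩
    obtain ⟨t, ht⟩ : ∃ t, R.natDegree = (u + 1) + t := ⟨R.natDegree - (u+1), by omega⟩
    obtain ⟨a, ha⟩ : ∃ a, ℓ + 1 = a + s := ⟨ℓ + 1 - s, by omega⟩
    rw [ht, show ℓ + 1 - s = a from by omega, show u + 1 - 1 = u from rfl,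
      show u + 1 + t - (u + 1) + 1 = t + 1 from by omega,
      show (ℓ + 1) * u = (a + s) * u from by rw [ha]]
    ring
  · exact Nat.mul_le_mul_left s (by omega)
end

section
/- Suppose deg R ≥ k and let b be a nonzero row vector of length ℓ+1 over F_q[X]. Let b' = b·W_ℓ where W_ℓ = diag(1, X^{k−1}, …, X^{ℓ(k−1)}). Then the row degree of the length-(ℓ+2) vector (0 | b')·X^{k−1} − R·(b' | 0) equals deg R + deg b'. -/
open Polynomial

open scoped Classical

/-- If deg R ≥ k and b is a nonzero row vector of length ℓ+1 with
b' = b·W_ℓ, then the row degree of (0 | b')·X^{k−1} − R·(b' | 0) equals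
deg R + deg b'. -/
theorem statement14 {F : Type*} [Field F] {k ℓ : ℕ} (hk : 1 ≤ k)
    (R : Polynomial F) (hRk : k ≤ R.natDegree)
    (b : Fin (ℓ + 1) → Polynomial F) (hb : b ≠ 0) :
    vecDeg (fun j : Fin (ℓ + 2) =>
        (if hj : 1 ≤ (j : ℕ) then
            (b ⟨(j : ℕ) - 1, by have := j.isLt; omega⟩) *
              X ^ ((((j : ℕ) - 1)) * (k - 1))
          else 0) * X ^ (k - 1)
        - R * (if hj : (j : ℕ) < ℓ + 1 then
            (b ⟨(j : ℕ), hj⟩) * X ^ ((j : ℕ) * (k - 1)) else 0)) =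
      R.degree + vecDeg (fun i : Fin (ℓ + 1) => b i * X ^ ((i : ℕ) * (k - 1))) := by

  classical
  have hR0 : R ≠ 0 := by
    intro h; rw [h] at hRk; simp at hRk; omega
  set b' : Fin (ℓ + 1) → Polynomial F := fun i => b i * X ^ ((i : ℕ) * (k - 1)) with hb'
  set D : WithBot ℕ := vecDeg b' with hD
  have hDle : ∀ i : Fin (ℓ + 1), (b' i).degree ≤ D := fun i => by
    exact Finset.le_sup (f := fun j => (b' j).degree) (Finset.mem_univ i)
  obtain ⟨i0, hi0⟩ : ∃ i, b i ≠ 0 := by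
    by_contra h; push_neg at h; exact hb (funext h)
  have hDbot : D ≠ ⊥ := by
    intro h
    have h2 := hDle i0
    rw [h, le_bot_iff, degree_eq_bot, hb'] at h2
    simp only [mul_eq_zero, pow_eq_zero_iff', X_ne_zero] at h2
    tauto
  have hk1 : ((k - 1 : ℕ) : WithBot ℕ) < R.degree := by
    rw [degree_eq_natDegree hR0]
    exact_mod_cast (by omega : k - 1 < R.natDegree)
  -- upper bound for the shifted term
  have hT1 : ∀ j : Fin (ℓ + 2),
      ((if hj : 1 ≤ (j : ℕ) then
          (b ⟨(j : ℕ) - 1, by have := j.isLt; omega⟩) *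
            X ^ ((((j : ℕ) - 1)) * (k - 1))
        else 0) * X ^ (k - 1)).degree ≤ D + ((k - 1 : ℕ) : WithBot ℕ) := by
    intro j
    split_ifs with hj
    · rw [degree_mul, degree_X_pow]
      exact add_le_add_left (hDle ⟨(j : ℕ) - 1, by have := j.isLt; omega⟩) _
    · simp
  have hT1' : ∀ j : Fin (ℓ + 2),
      ((if hj : 1 ≤ (j : ℕ) then
          (b ⟨(j : ℕ) - 1, by have := j.isLt; omega⟩) *
            X ^ ((((j : ℕ) - 1)) * (k - 1))
        else 0) * X ^ (k - 1)).degree < D + R.degree := by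
    intro j
    refine lt_of_le_of_lt (hT1 j) ?_
    exact WithBot.add_lt_add_left hDbot hk1
  have hT2 : ∀ j : Fin (ℓ + 2),
      (R * (if hj : (j : ℕ) < ℓ + 1 then
          (b ⟨(j : ℕ), hj⟩) * X ^ ((j : ℕ) * (k - 1)) else 0)).degree ≤ R.degree + D := by
    intro j
    rw [degree_mul]
    refine add_le_add_right ?_ _
    split_ifs with hj
    · exact hDle ⟨(j : ℕ), hj⟩
    · simp
  rw [vecDeg]
  apply le_antisymm
  · refine Finset.sup_le fun j _ => ?_
    refine le_trans (degree_sub_le _ _) (max_le ?_ (hT2 j))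
    refine le_trans (hT1 j) ?_
    rw [add_comm (R.degree) D]
    exact add_le_add_right (le_of_lt hk1) _
  · obtain ⟨i1, -, hi1⟩ := Finset.exists_mem_eq_sup (Finset.univ : Finset (Fin (ℓ + 1)))
      Finset.univ_nonempty fun i => (b' i).degree
    have hDeq : D = (b' i1).degree := by rw [hD, vecDeg]; exact hi1
    set jc : Fin (ℓ + 2) := ⟨(i1 : ℕ), by have := i1.isLt; omega⟩ with hjc
    have hjclt : (jc : ℕ) < ℓ + 1 := i1.isLt
    have hkey : ((if hj : 1 ≤ (jc : ℕ) then
          (b ⟨(jc : ℕ) - 1, by have := jc.isLt; omega⟩) *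
            X ^ ((((jc : ℕ) - 1)) * (k - 1))
        else 0) * X ^ (k - 1)
        - R * (if hj : (jc : ℕ) < ℓ + 1 then
            (b ⟨(jc : ℕ), hj⟩) * X ^ ((jc : ℕ) * (k - 1)) else 0)).degree
        = R.degree + D := by
      rw [dif_pos hjclt]
      have hfin : (⟨(jc : ℕ), hjclt⟩ : Fin (ℓ + 1)) = i1 := by
        ext; simp [hjc]
      have hc : ((jc : ℕ) : ℕ) = (i1 : ℕ) := rfl
      have hR2 : (R * ((b ⟨(jc : ℕ), hjclt⟩) * X ^ ((jc : ℕ) * (k - 1)))).degree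
          = R.degree + D := by
        simp only [hfin, hc]
        rw [degree_mul]
        show R.degree + (b' i1).degree = R.degree + D
        rw [hDeq]
      rw [degree_sub_eq_right_of_degree_lt, hR2]
      rw [hR2, add_comm R.degree D]
      exact hT1' jc
    have hfs := Finset.le_sup (s := (Finset.univ : Finset (Fin (ℓ + 2))))
      (f := fun j : Fin (ℓ + 2) =>
        ((if hj : 1 ≤ (j : ℕ) then
            (b ⟨(j : ℕ) - 1, by have := j.isLt; omega⟩) *
              X ^ ((((j : ℕ) - 1)) * (k - 1))
          else 0) * X ^ (k - 1)
        - R * (if hj : (j : ℕ) < ℓ + 1 then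
            (b ⟨(j : ℕ), hj⟩) * X ^ ((j : ℕ) * (k - 1)) else 0)).degree)
      (Finset.mem_univ jc)
    rw [← hkey]
    exact hfs
end

section
/- Every bivariate polynomial Q(X,Y) vanishing to multiplicity at least 1 at the n points (α_i, r_i') and of Y-degree at most 1 is an F_q[X]-linear combination of G(X) and Y − R(X), where G(X) = ∏_i (X − α_i) and R is the Lagrange polynomial through the points. -/
open Polynomial

/-- Every bivariate polynomial Q(X,Y) of Y-degree at most 1 vanishing at
the n points (α_i, r_i') is an F[X]-linear combination of G(X) = ∏_i (X − α_i) and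
Y − R(X), where R is the Lagrange polynomial through the points. -/
theorem statement15 {F : Type*} [Field F] [Fintype F] {n : ℕ}
    (α : Fin n → F) (hα : Function.Injective α) (r' : Fin n → F)
    (R : Polynomial F) (hRdeg : R.natDegree < n) (hR : ∀ i, R.eval (α i) = r' i)
    (Q : Polynomial (Polynomial F)) (hQdeg : Q.natDegree ≤ 1)
    (hQ : ∀ i, (Q.eval (C (r' i))).eval (α i) = 0) :
    ∃ p q : Polynomial F,
      Q = C (p * ∏ i, (X - C (α i))) + C q * (X - C R) := by
  set Q0 := Q.coeff 0 with hQ0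
  set Q1 := Q.coeff 1 with hQ1
  have hQeq : Q = C Q1 * X + C Q0 := Polynomial.eq_X_add_C_of_natDegree_le_one hQdeg
  have hroot : ∀ i, (Q0 + Q1 * R).eval (α i) = 0 := by
    intro i
    have h := hQ i
    rw [hQeq] at h
    simp [hR i] at h
    simp [hR i]
    linear_combination h
  have hdvd : (∏ i, (X - C (α i))) ∣ (Q0 + Q1 * R) := by
    apply Finset.prod_dvd_of_coprime
    · intro i _ j _ hij
      exact (Polynomial.pairwise_coprime_X_sub_C hα) hij
    · intro i _
      exact (Polynomial.dvd_iff_isRoot).2 (hroot i)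
  obtain ⟨p, hp⟩ := hdvd
  refine ⟨p, Q1, ?_⟩
  rw [hQeq]
  rw [mul_comm p, ← hp, map_add, map_mul]
  ring
end

section
/- Let Q(X,Y) be a nonzero polynomial of Y-degree at most ℓ that vanishes with multiplicity at least s at all n points (α_i, r_i/w_i), and has (1,k−1)-weighted degree less than s(n−τ). If c is a codeword of the generalized Reed–Solomon code with evaluation points α_i, column multipliers w_i, and dimension k, given by c_i = w_i f(α_i) for a polynomial f of degree < k, and the Hamming distance between c and r = (r_0,…,r_{n−1}) is at most τ, then (Y − f(X)) divides Q(X,Y). -/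
open Polynomial

open scoped Classical

/-- The (1, k−1)-weighted degree of a bivariate polynomial `Q : F[X][Y]`. -/
noncomputable def wdeg {F : Type*} [Field F] (k : ℕ) (Q : Polynomial (Polynomial F)) : ℕ :=
  Q.support.sup fun j => (Q.coeff j).natDegree + (k - 1) * j

lemma shift_unshift {F : Type*} [Field F] (Q : Polynomial (Polynomial F)) (a b : F) :
    shiftXY (shiftXY Q a b) (-a) (-b) = Q := by
  unfold shiftXY
  set φ := ((aeval (X + C a : Polynomial F)).toRingHom : Polynomial F →+* Polynomial F)
  set ψ := ((aeval (X + C (-a) : Polynomial F)).toRingHom : Polynomial F →+* Polynomial F)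
  have hmapC : (X + C (C b) : Polynomial (Polynomial F)).map ψ = X + C (C b) := by
    simp [ψ]
  rw [Polynomial.map_comp, hmapC, Polynomial.comp_assoc, Polynomial.map_map]
  have hψφ : ψ.comp φ = RingHom.id (Polynomial F) := by
    apply Polynomial.ringHom_ext
    · intro r; simp [φ, ψ]
    · simp [φ, ψ]
  have : (X + C (C b) : Polynomial (Polynomial F)).comp (X + C (C (-b))) = X := by
    simp [add_comm]
  rw [this, hψφ, Polynomial.map_id, Polynomial.comp_X]

lemma eval_shiftXY {F : Type*} [Field F] (Q : Polynomial (Polynomial F)) (a b : F)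
    (c : Polynomial F) :
    (shiftXY Q a b).eval c =
      Q.eval₂ ((aeval (X + C a : Polynomial F)).toRingHom : Polynomial F →+* Polynomial F)
        (c + C b) := by
  unfold shiftXY
  rw [eval_comp, eval_map]
  simp

lemma mult_dvd {F : Type*} [Field F] (Q : Polynomial (Polynomial F)) (a b : F) (s : ℕ)
    (hm : HasMultAt Q a b s) (f : Polynomial F) (hfa : f.eval a = b) :
    (X - C a) ^ s ∣ Q.eval f := by
  set ψ := ((aeval (X + C (-a) : Polynomial F)).toRingHom : Polynomial F →+* Polynomial F)
  have key : Q.eval f = (shiftXY Q a b).eval₂ ψ (f + C (-b)) := by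
    conv_lhs => rw [← shift_unshift Q a b]
    rw [eval_shiftXY]
  rw [key, eval₂_eq_sum, Polynomial.sum]
  apply Finset.dvd_sum
  intro j _
  have hdvd1 : (X - C a) ∣ (f + C (-b)) := by
    have : f + C (-b) = f - C b := by simp [sub_eq_add_neg]
    rw [this, dvd_iff_isRoot]
    simp [IsRoot, hfa]
  by_cases hjs : s ≤ j
  · exact Dvd.dvd.mul_left ((pow_dvd_pow _ hjs).trans (pow_dvd_pow_of_dvd hdvd1 j)) _
  · push_neg at hjs
    have h1 : (X : Polynomial F) ^ (s - j) ∣ (shiftXY Q a b).coeff j := by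
      rw [X_pow_dvd_iff]
      intro d hd
      exact hm d j (by omega)
    have h2 : (X - C a) ^ (s - j) ∣ ψ ((shiftXY Q a b).coeff j) := by
      have := map_dvd ψ h1
      simpa [ψ, sub_eq_add_neg] using this
    have h3 : (X - C a) ^ j ∣ (f + C (-b)) ^ j := pow_dvd_pow_of_dvd hdvd1 j
    have : (X - C a) ^ (s - j) * (X - C a) ^ j = (X - C a) ^ s := by
      rw [← pow_add]; congr 1; omega
    rw [← this]
    exact mul_dvd_mul h2 h3

lemma eval_natDegree_le {F : Type*} [Field F] (k : ℕ) (Q : Polynomial (Polynomial F))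
    (f : Polynomial F) (hf : f.natDegree ≤ k - 1) :
    (Q.eval f).natDegree ≤ wdeg k Q := by
  rw [eval_eq_sum, Polynomial.sum]
  apply Polynomial.natDegree_sum_le_of_forall_le
  intro j hj
  calc (Q.coeff j * f ^ j).natDegree ≤ (Q.coeff j).natDegree + (f ^ j).natDegree :=
        natDegree_mul_le
    _ ≤ (Q.coeff j).natDegree + (k - 1) * j := by
        have := natDegree_pow_le (p := f) (n := j)
        have : (f ^ j).natDegree ≤ (k - 1) * j := by
          calc (f ^ j).natDegree ≤ j * f.natDegree := natDegree_pow_le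
            _ ≤ (k - 1) * j := by
              rw [mul_comm]; exact Nat.mul_le_mul_right j hf
        omega
    _ ≤ wdeg k Q := Finset.le_sup (f := fun j => (Q.coeff j).natDegree + (k - 1) * j) hj

/-- Guruswami–Sudan for GRS codes: If Q ≠ 0 has Y-degree ≤ ℓ, vanishes
with multiplicity ≥ s at all points (α_i, r_i/w_i), and has (1,k−1)-weighted degree
< s(n−τ), then for any codeword c_i = w_i f(α_i) (deg f < k) at Hamming distance ≤ τ
from r, we have (Y − f(X)) ∣ Q(X,Y). -/
theorem statement16 {F : Type*} [Field F] [Fintype F] {n k s ℓ τ : ℕ}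
    (hk : 1 ≤ k) (hkn : k ≤ n) (hs : 1 ≤ s) (hℓ : 1 ≤ ℓ) (hτ : τ < n)
    (hq : n < Fintype.card F)
    (α : Fin n → F) (hα : Function.Injective α) (hα0 : ∀ i, α i ≠ 0)
    (w : Fin n → F) (hw : ∀ i, w i ≠ 0)
    (r : Fin n → F)
    (f : Polynomial F) (hf : f.natDegree < k)
    (hdist : (Finset.univ.filter fun i => w i * f.eval (α i) ≠ r i).card ≤ τ)
    (Q : Polynomial (Polynomial F)) (hQ0 : Q ≠ 0) (hQℓ : Q.natDegree ≤ ℓ)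
    (hmult : ∀ i, HasMultAt Q (α i) (r i / w i) s)
    (hwdeg : wdeg k Q < s * (n - τ)) :
    (X - C f) ∣ Q := by
  rw [dvd_iff_isRoot]
  set g := Q.eval f with hg
  set E := Finset.univ.filter (fun i => w i * f.eval (α i) = r i) with hE
  have hcardE : n - τ ≤ E.card := by
    have h1 : E.card + (Finset.univ.filter fun i => w i * f.eval (α i) ≠ r i).card = n := by
      rw [hE]
      simpa using Finset.card_filter_add_card_filter_not
        (s := (Finset.univ : Finset (Fin n))) (p := fun i => w i * f.eval (α i) = r i)
    omega
  have hdvdP : (∏ i ∈ E, (X - C (α i)) ^ s) ∣ g := by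
    apply Finset.prod_dvd_of_coprime
    · intro i _ j _ hij
      exact ((Polynomial.pairwise_coprime_X_sub_C hα hij).pow)
    · intro i hi
      apply mult_dvd Q (α i) (r i / w i) s (hmult i) f
      have hi' : w i * f.eval (α i) = r i := by
        rw [hE, Finset.mem_filter] at hi
        exact hi.2
      rw [eq_div_iff (hw i), mul_comm]
      exact hi'
  have hP0 : ∀ i ∈ E, ((X : Polynomial F) - C (α i)) ^ s ≠ 0 :=
    fun i _ => pow_ne_zero _ (X_sub_C_ne_zero _)
  have hdegP : (∏ i ∈ E, (X - C (α i)) ^ s).natDegree = s * E.card := by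
    rw [Polynomial.natDegree_prod _ _ hP0]
    simp [natDegree_pow, mul_comm]
  by_contra hgne
  have hgne' : g ≠ 0 := hgne
  have h2 : (∏ i ∈ E, (X - C (α i)) ^ s).natDegree ≤ g.natDegree :=
    Polynomial.natDegree_le_of_dvd hdvdP hgne'
  have h3 : g.natDegree ≤ wdeg k Q := eval_natDegree_le k Q f (by omega)
  have h4 : s * (n - τ) ≤ s * E.card := Nat.mul_le_mul_left s hcardE
  omega
end

section
/- If E(s,ℓ,τ) = (ℓ+1)s(n−τ) − binom(ℓ+1,2)(k−1) − binom(s+1,2)n > 0, then there exists a nonzero bivariate polynomial Q(X,Y) over F_q of Y-degree at most ℓ, (1,k−1)-weighted degree less than s(n−τ), that vanishes with multiplicity at least s at each of the n points (α_i, r_i'). -/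
open Polynomial

section Aux

variable {F : Type*} [Field F]

lemma shiftXY_add (P Q : Polynomial (Polynomial F)) (a b : F) :
    shiftXY (P + Q) a b = shiftXY P a b + shiftXY Q a b := by
  simp [shiftXY, Polynomial.map_add, add_comp]

lemma shiftXY_smul (c : F) (Q : Polynomial (Polynomial F)) (a b : F) :
    shiftXY (c • Q) a b = c • shiftXY Q a b := by
  have hmap : (c • Q).map ((aeval (X + C a : Polynomial F)).toRingHom :
      Polynomial F →+* Polynomial F) =
      c • Q.map ((aeval (X + C a : Polynomial F)).toRingHom :
      Polynomial F →+* Polynomial F) := by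
    simp only [AlgHom.toRingHom_eq_coe, ← Polynomial.coe_mapAlgHom]
    exact map_smul (Polynomial.mapAlgHom (aeval (X + C a : Polynomial F))) c Q
  rw [shiftXY, hmap, smul_comp, shiftXY]

lemma gauss_sum (m : ℕ) : ∑ j ∈ Finset.range m, j = m.choose 2 := by
  rw [Finset.sum_range_id, Nat.choose_two_right]

end Aux

/-- If E(s,ℓ,τ) = (ℓ+1)s(n−τ) − C(ℓ+1,2)(k−1) − C(s+1,2)n > 0, then there
exists a nonzero Q(X,Y) of Y-degree ≤ ℓ and (1,k−1)-weighted degree < s(n−τ) vanishing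
with multiplicity ≥ s at each of the n points (α_i, r_i'). -/
theorem statement17 {F : Type*} [Field F] [Fintype F] {n k s ℓ τ : ℕ}
    (hk : 1 ≤ k) (hkn : k ≤ n) (hs : 1 ≤ s) (hsℓ : s ≤ ℓ) (hτ : τ < n)
    (α : Fin n → F) (hα : Function.Injective α) (r' : Fin n → F)
    (hE : 0 < (ℓ + 1 : ℤ) * s * ((n : ℤ) - τ)
        - ((ℓ + 1).choose 2 : ℤ) * ((k : ℤ) - 1)
        - ((s + 1).choose 2 : ℤ) * n) :
    ∃ Q : Polynomial (Polynomial F), Q ≠ 0 ∧ Q.natDegree ≤ ℓ ∧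
      wdeg k Q < s * (n - τ) ∧ ∀ i, HasMultAt Q (α i) (r' i) s := by
  classical
  set N := s * (n - τ) with hN
  have hNpos : 0 < N := Nat.mul_pos hs (by omega)
  set T : Finset ((_ : ℕ) × ℕ) :=
    (Finset.range (ℓ + 1)).sigma (fun j => Finset.range (N - (k - 1) * j)) with hT
  set Cs : Finset ((_ : ℕ) × ℕ) :=
    (Finset.range s).sigma (fun a => Finset.range (s - a)) with hCs
  -- the polynomial built from a coefficient vector
  set Qof : (↥T → F) → Polynomial (Polynomial F) := fun v =>
    ∑ t ∈ T.attach, v t • (monomial t.1.1 (monomial t.1.2 (1 : F))) with hQof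
  have coeff_Qof : ∀ (v : ↥T → F) (j i : ℕ), (((Qof v).coeff j).coeff i) =
      if h : (⟨j, i⟩ : (_ : ℕ) × ℕ) ∈ T then v ⟨⟨j, i⟩, h⟩ else 0 := by
    intro v j i
    have hterm : ∀ t : ↥T,
        (((v t • (monomial t.1.1 (monomial t.1.2 (1 : F)))).coeff j).coeff i) =
        if t.1 = (⟨j, i⟩ : (_ : ℕ) × ℕ) then v t else 0 := by
      intro t
      obtain ⟨⟨j', i'⟩, hmem⟩ := t
      simp only [coeff_smul, coeff_monomial, Sigma.mk.inj_iff, heq_eq_eq]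
      by_cases hj : j' = j
      · subst hj
        by_cases hi : i' = i
        · subst hi; simp
        · simp [coeff_monomial, hi]
      · simp [hj]
    calc ((Qof v).coeff j).coeff i
        = ∑ t ∈ T.attach, (((v t • (monomial t.1.1 (monomial t.1.2 (1 : F)))).coeff j).coeff i) := by
          rw [hQof]
          rw [finset_sum_coeff]
          rw [finset_sum_coeff]
      _ = ∑ t ∈ T.attach, (if t.1 = (⟨j, i⟩ : (_ : ℕ) × ℕ) then v t else 0) :=
          Finset.sum_congr rfl (fun t _ => hterm t)
      _ = if h : (⟨j, i⟩ : (_ : ℕ) × ℕ) ∈ T then v ⟨⟨j, i⟩, h⟩ else 0 := by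
          by_cases h : (⟨j, i⟩ : (_ : ℕ) × ℕ) ∈ T
          · rw [dif_pos h]
            rw [show (∑ t ∈ T.attach, (if t.1 = (⟨j, i⟩ : (_ : ℕ) × ℕ) then v t else 0))
                = ∑ t ∈ T.attach, (if t = (⟨⟨j, i⟩, h⟩ : ↥T) then v t else 0) from
              Finset.sum_congr rfl (fun t _ => by
                congr 1
                simp [Subtype.ext_iff])]
            rw [Finset.sum_ite_eq' T.attach (⟨⟨j, i⟩, h⟩ : ↥T)]
            simp
          · rw [dif_neg h]
            refine Finset.sum_eq_zero (fun t _ => ?_)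
            rw [if_neg]
            intro hc
            exact h (hc ▸ t.2)
  -- linearity of Qof
  have Qof_add : ∀ v w, Qof (v + w) = Qof v + Qof w := by
    intro v w
    simp only [hQof, Pi.add_apply, add_smul, Finset.sum_add_distrib]
  have Qof_smul : ∀ (c : F) v, Qof (c • v) = c • Qof v := by
    intro c v
    simp only [hQof, Pi.smul_apply, smul_smul, smul_eq_mul, Finset.smul_sum]
  -- the linear constraint map
  set Φ : (↥T → F) → ((Fin n × ↥Cs) → F) := fun v pc =>
    ((shiftXY (Qof v) (α pc.1) (r' pc.1)).coeff pc.2.1.2).coeff pc.2.1.1 with hΦ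
  set L : (↥T → F) →ₗ[F] ((Fin n × ↥Cs) → F) :=
    { toFun := Φ
      map_add' := by
        intro v w
        funext pc
        simp [hΦ, Qof_add, shiftXY_add, coeff_add]
      map_smul' := by
        intro c v
        funext pc
        simp [hΦ, Qof_smul, shiftXY_smul, coeff_smul] } with hL
  -- cardinalities
  have hTcard : T.card = ∑ j ∈ Finset.range (ℓ + 1), (N - (k - 1) * j) := by
    rw [hT, Finset.card_sigma]
    simp
  have hCscard : Cs.card = (s + 1).choose 2 := by
    rw [hCs, Finset.card_sigma]
    simp only [Finset.card_range]
    have h1 : ∑ a ∈ Finset.range s, (s - a) = ∑ a ∈ Finset.range s, (a + 1) := by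
      rw [← Finset.sum_range_reflect (fun a => a + 1) s]
      refine Finset.sum_congr rfl (fun a ha => ?_)
      rw [Finset.mem_range] at ha
      omega
    rw [h1, Finset.sum_add_distrib, gauss_sum, Finset.sum_const, Finset.card_range,
      smul_eq_mul, mul_one, Nat.choose_succ_succ s 1, Nat.choose_one_right, add_comm]
  -- the dimension inequality
  have hcard : (n : ℤ) * Cs.card < T.card := by
    have hlow : ((ℓ + 1 : ℕ) : ℤ) * N - ((k : ℤ) - 1) * ((ℓ + 1).choose 2 : ℤ)
        ≤ (T.card : ℤ) := by
      rw [hTcard]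
      push_cast
      have : ∀ j ∈ Finset.range (ℓ + 1),
          (N : ℤ) - ((k : ℤ) - 1) * j ≤ ((N - (k - 1) * j : ℕ) : ℤ) := by
        intro j _
        have hkc : (((k - 1) * j : ℕ) : ℤ) = ((k : ℤ) - 1) * j := by
          push_cast [Nat.cast_sub hk]
          ring
        omega
      calc ((ℓ + 1 : ℕ) : ℤ) * N - ((k : ℤ) - 1) * ((ℓ + 1).choose 2 : ℤ)
          = ∑ j ∈ Finset.range (ℓ + 1), ((N : ℤ) - ((k : ℤ) - 1) * j) := by
            rw [Finset.sum_sub_distrib, Finset.sum_const, Finset.card_range, ← Finset.mul_sum]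
            have : ∑ j ∈ Finset.range (ℓ + 1), (j : ℤ) = ((ℓ + 1).choose 2 : ℤ) := by
              rw [← gauss_sum (ℓ + 1)]
              push_cast
              ring
            rw [this]
            push_cast
            ring
        _ ≤ ∑ j ∈ Finset.range (ℓ + 1), ((N - (k - 1) * j : ℕ) : ℤ) :=
            Finset.sum_le_sum this
    have hNval : (N : ℤ) = (s : ℤ) * ((n : ℤ) - τ) := by
      rw [hN]
      push_cast [Nat.cast_sub hτ.le]
      ring
    have h2 : ((ℓ + 1 : ℕ) : ℤ) * N = ((ℓ : ℤ) + 1) * s * ((n : ℤ) - τ) := by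
      rw [hNval]; push_cast; ring
    rw [h2] at hlow
    rw [hCscard]
    linarith [hlow, hE]
  -- get a nonzero kernel element
  have hnotinj : ¬ Function.Injective L := by
    intro hinj
    have hle := LinearMap.finrank_le_finrank_of_injective hinj
    rw [Module.finrank_fintype_fun_eq_card, Module.finrank_fintype_fun_eq_card,
      Fintype.card_coe, Fintype.card_prod, Fintype.card_coe, Fintype.card_fin] at hle
    have : (T.card : ℤ) ≤ (n : ℤ) * Cs.card := by exact_mod_cast hle
    omega
  rw [Function.not_injective_iff] at hnotinj
  obtain ⟨x, y, hxy, hne⟩ := hnotinj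
  set v := x - y with hv
  have hv0 : v ≠ 0 := sub_ne_zero.mpr hne
  have hLv : L v = 0 := by
    rw [hv, map_sub, hxy, sub_self]
  refine ⟨Qof v, ?_, ?_, ?_, ?_⟩
  · -- nonzero
    intro hQ0
    obtain ⟨t, ht⟩ := Function.ne_iff.mp hv0
    apply ht
    have := coeff_Qof v t.1.1 t.1.2
    rw [hQ0] at this
    simp only [coeff_zero] at this
    rw [dif_pos (show (⟨t.1.1, t.1.2⟩ : (_ : ℕ) × ℕ) ∈ T from t.2)] at this
    simpa using this.symm
  · -- Y-degree
    rw [Polynomial.natDegree_le_iff_coeff_eq_zero]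
    intro j hj
    ext i
    rw [coeff_Qof, dif_neg, coeff_zero]
    intro hmem
    simp only [hT, Finset.mem_sigma, Finset.mem_range] at hmem
    omega
  · -- weighted degree
    rw [wdeg]
    rw [Finset.sup_lt_iff (by exact hNpos : (⊥ : ℕ) < N)]
    intro j hj
    rw [mem_support_iff] at hj
    have hd : ((Qof v).coeff j).coeff ((Qof v).coeff j).natDegree ≠ 0 :=
      Polynomial.leadingCoeff_ne_zero.mpr hj
    rw [coeff_Qof] at hd
    by_cases hmem : (⟨j, ((Qof v).coeff j).natDegree⟩ : (_ : ℕ) × ℕ) ∈ T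
    · simp only [hT, Finset.mem_sigma, Finset.mem_range] at hmem
      omega
    · rw [dif_neg hmem] at hd
      exact absurd rfl hd
  · -- multiplicity
    intro p i j hij
    have hmem : (⟨i, j⟩ : (_ : ℕ) × ℕ) ∈ Cs := by
      simp only [hCs, Finset.mem_sigma, Finset.mem_range]
      omega
    have := congrFun hLv (p, ⟨⟨i, j⟩, hmem⟩)
    simpa [hL, hΦ] using this
end

section
/- Let Q(X,Y) ∈ F_q[X][Y] be nonzero with Y-degree at most ℓ and suppose Q_ℓ(X), the Y^ℓ-coefficient, is a unit times a monic polynomial (nonzero). If Q vanishes with multiplicity at least s at each point (α_i, r_i') and f(X) ∈ F_q[X] satisfies deg f < k and f(α_i) = r_i' for at least n − τ indices i, where the (1,k−1)-weighted degree of Q is less than s(n−τ), then Q(X, f(X)) = 0 identically. -/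
open Polynomial

open scoped Classical

section Aux
variable {F : Type*} [Field F]

noncomputable def phiX (a : F) : Polynomial F →+* Polynomial F :=
  ((aeval (X + C a : Polynomial F)).toRingHom : Polynomial F →+* Polynomial F)

lemma phiX_apply (a : F) (p : Polynomial F) : phiX a p = p.comp (X + C a) := by
  simp [phiX, aeval_def, eval₂_def, comp, Polynomial.algebraMap_eq]

lemma phiX_phiX (a : F) (p : Polynomial F) : phiX (-a) (phiX a p) = p := by
  simp [phiX_apply, comp_assoc]

lemma eval_shift_eq (Q : Polynomial (Polynomial F)) (a b : F) (f : Polynomial F) :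
    Q.eval f = ((shiftXY Q a b).map (phiX (-a))).eval (f - C b) := by
  have hhom : (evalRingHom f : Polynomial (Polynomial F) →+* Polynomial F) =
      (evalRingHom (f - C b)).comp ((mapRingHom (phiX (-a))).comp
        ((eval₂RingHom C (X + C (C b))).comp (mapRingHom (phiX a)))) := by
    apply Polynomial.ringHom_ext
    · intro p
      simp [coe_eval₂RingHom, eval₂_C, phiX_phiX]
    · simp [coe_eval₂RingHom, phiX]
  have := RingHom.congr_fun hhom Q
  simpa [shiftXY, phiX, comp, coe_eval₂RingHom, eval₂_def] using this

lemma dvd_eval_of_mult {Q : Polynomial (Polynomial F)} {a b : F} {s : ℕ}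
    (hm : HasMultAt Q a b s) {f : Polynomial F} (hfa : f.eval a = b) :
    (X - C a) ^ s ∣ Q.eval f := by
  rw [eval_shift_eq Q a b f]
  set R := (shiftXY Q a b).map (phiX (-a)) with hR
  rw [eval_eq_sum_range]
  apply Finset.dvd_sum
  intro j _
  have hcoeff : R.coeff j = phiX (-a) ((shiftXY Q a b).coeff j) := coeff_map _ _
  have hdvd1 : f - C b ≠ 0 ∨ True := Or.inr trivial
  have hXa : (X - C a) ∣ (f - C b) := by
    rw [dvd_iff_isRoot]
    simp [IsRoot, hfa]
  by_cases hj : s ≤ j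
  · calc (X - C a) ^ s ∣ (f - C b) ^ s := pow_dvd_pow_of_dvd hXa s
      _ ∣ (f - C b) ^ j := pow_dvd_pow _ hj
      _ ∣ R.coeff j * (f - C b) ^ j := Dvd.intro_left _ rfl
  · push_neg at hj
    have h1 : (X : Polynomial F) ^ (s - j) ∣ (shiftXY Q a b).coeff j := by
      rw [X_pow_dvd_iff]
      intro d hd
      exact hm d j (by omega)
    have h2 : (X - C a) ^ (s - j) ∣ R.coeff j := by
      rw [hcoeff, sub_eq_add_neg]
      have := map_dvd (phiX (-a)) h1
      simpa [phiX_apply, pow_comp] using this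
    have h3 : (X - C a) ^ j ∣ (f - C b) ^ j := pow_dvd_pow_of_dvd hXa j
    have : (X - C a) ^ (s - j) * (X - C a) ^ j ∣ R.coeff j * (f - C b) ^ j :=
      mul_dvd_mul h2 h3
    rwa [← pow_add, Nat.sub_add_cancel hj.le] at this

lemma natDegree_eval_le_wdeg {k : ℕ} (Q : Polynomial (Polynomial F)) {f : Polynomial F}
    (hf : f.natDegree ≤ k - 1) : (Q.eval f).natDegree ≤ wdeg k Q := by
  rw [eval_eq_sum, Polynomial.sum]
  apply natDegree_sum_le_of_forall_le
  intro j hj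
  calc (Q.coeff j * f ^ j).natDegree ≤ (Q.coeff j).natDegree + (f ^ j).natDegree :=
        natDegree_mul_le
    _ ≤ (Q.coeff j).natDegree + j * f.natDegree := by
        exact Nat.add_le_add_left (natDegree_pow_le) _
    _ ≤ (Q.coeff j).natDegree + (k - 1) * j := by
        have : j * f.natDegree ≤ (k-1) * j := by
          calc j * f.natDegree ≤ j * (k-1) := Nat.mul_le_mul_left _ hf
            _ = (k-1) * j := Nat.mul_comm _ _
        omega
    _ ≤ wdeg k Q := by rw [wdeg]; exact Finset.le_sup (f := fun j => (Q.coeff j).natDegree + (k - 1) * j) hj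

end Aux

/-- Let Q ≠ 0 have Y-degree ≤ ℓ with nonzero Y^ℓ-coefficient. If Q
vanishes with multiplicity ≥ s at each (α_i, r_i'), f has deg f < k and f(α_i) = r_i'
for at least n − τ indices, and the (1,k−1)-weighted degree of Q is < s(n−τ), then
Q(X, f(X)) = 0 identically. -/
theorem statement19 {F : Type*} [Field F] [Fintype F] {n k s ℓ τ : ℕ}
    (hk : 1 ≤ k) (hs : 1 ≤ s) (hℓ : 1 ≤ ℓ) (hτ : τ < n)
    (α : Fin n → F) (hα : Function.Injective α) (r' : Fin n → F)
    (Q : Polynomial (Polynomial F)) (hQ0 : Q ≠ 0) (hQℓ : Q.natDegree ≤ ℓ)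
    (hQlead : Q.coeff ℓ ≠ 0)
    (hmult : ∀ i, HasMultAt Q (α i) (r' i) s)
    (f : Polynomial F) (hf : f.natDegree < k)
    (hagree : n - τ ≤ (Finset.univ.filter fun i => f.eval (α i) = r' i).card)
    (hwdeg : wdeg k Q < s * (n - τ)) :
    Q.eval f = 0 := by
  by_contra hP
  set S : Finset (Fin n) := Finset.univ.filter fun i => f.eval (α i) = r' i with hS
  have hdvd : ∀ i ∈ S, (X - C (α i)) ^ s ∣ Q.eval f := by
    intro i hi
    have : f.eval (α i) = r' i := (Finset.mem_filter.mp hi).2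
    exact dvd_eval_of_mult (hmult i) this
  have hcop : (↑S : Set (Fin n)).Pairwise (Function.onFun IsCoprime fun i => (X - C (α i)) ^ s) := by
    intro i _ j _ hij
    exact ((pairwise_coprime_X_sub_C hα) hij).pow
  have hprod : (∏ i ∈ S, (X - C (α i)) ^ s) ∣ Q.eval f :=
    Finset.prod_dvd_of_coprime hcop hdvd
  have hdeg : (∏ i ∈ S, (X - C (α i)) ^ s).natDegree = s * S.card := by
    rw [natDegree_prod _ _ (fun i _ => pow_ne_zero _ (X_sub_C_ne_zero _))]
    simp [natDegree_pow, mul_comm, Finset.sum_const]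
  have h1 : s * S.card ≤ (Q.eval f).natDegree := by
    rw [← hdeg]; exact natDegree_le_of_dvd hprod hP
  have h2 : (Q.eval f).natDegree ≤ wdeg k Q :=
    natDegree_eval_le_wdeg Q (by omega)
  have h3 : s * (n - τ) ≤ s * S.card := Nat.mul_le_mul_left _ hagree
  omega
end
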